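/- arXiv:0809.2291 — 3 statements merged into one kernel-verified Lean document; each statement's English description precedes it below -/
import Mathlib

section
/- Let T be a locally finite face-to-face tiling of Euclidean d-space ℝ^d by convex d-polytopes, and let k be a positive integer with N_{k−1}(T) = N_k(T) < ∞. Then for any two tiles P, P' of T, the centered k-th coronas (P, C_k(P)) and (P', C_k(P')) are isomorphic if and only if the centered (k−1)-st coronas (P, C_{k−1}(P)) and (P', C_{k−1}(P')) are isomorphic. -/
noncomputable section
open scoped Classical

abbrev EucSp (d : ℕ) := EuclideanSpace ℝ (Fin d)

/-- `F` is a face of the convex set `P` (exposed face; includes `∅` and `P` itself). -/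
def IsFaceOf {d : ℕ} (F P : Set (EucSp d)) : Prop := IsExposed ℝ P F

/-- A convex `d`-polytope: the convex hull of a finite point set, with nonempty interior. -/
def IsPolytope (d : ℕ) (P : Set (EucSp d)) : Prop :=
  (∃ s : Finset (EucSp d), P = convexHull ℝ (s : Set (EucSp d))) ∧ (interior P).Nonempty

/-- Affine dimension of a set, the empty set having dimension `-1`. -/
def fdimZ {d : ℕ} (F : Set (EucSp d)) : ℤ :=
  if F = ∅ then -1 else (Module.finrank ℝ (affineSpan ℝ F).direction : ℤ)

/-- A locally finite face-to-face tiling of `ℝ^d` by convex `d`-polytopes. -/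
structure Tiling (d : ℕ) where
  tiles : Set (Set (EucSp d))
  countable : tiles.Countable
  polytope : ∀ P ∈ tiles, IsPolytope d P
  covers : ⋃₀ tiles = Set.univ
  disjointInteriors : ∀ P ∈ tiles, ∀ Q ∈ tiles, P ≠ Q → interior P ∩ interior Q = ∅
  locallyFinite : ∀ x : EucSp d, ∃ U ∈ nhds x, {P | P ∈ tiles ∧ (P ∩ U).Nonempty}.Finite
  faceToFace : ∀ P ∈ tiles, ∀ Q ∈ tiles, IsFaceOf (P ∩ Q) P ∧ IsFaceOf (P ∩ Q) Q

variable {d : ℕ}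

/-- A sequence of `n+1` tiles from `P` to `Q` in which any two consecutive tiles meet
in a face of dimension at least `d - 2`. -/
def TileChain (T : Tiling d) (P Q : Set (EucSp d)) (n : ℕ) : Prop :=
  ∃ f : ℕ → Set (EucSp d), f 0 = P ∧ f n = Q ∧ (∀ j ≤ n, f j ∈ T.tiles) ∧
    ∀ j, 1 ≤ j → j ≤ n → (d : ℤ) - 2 ≤ fdimZ (f (j - 1) ∩ f j)

/-- The distance between two tiles of `T` (`⊤` if they cannot be joined). -/
def tileDist (T : Tiling d) (P Q : Set (EucSp d)) : ℕ∞ :=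
  sInf {n : ℕ∞ | ∃ m : ℕ, n = (m : ℕ∞) ∧ TileChain T P Q m}

/-- The `k`-th corona of `P`: the set of all faces of tiles at distance at most `k` from `P`. -/
def corona (T : Tiling d) (k : ℕ) (P : Set (EucSp d)) : Set (Set (EucSp d)) :=
  {F | ∃ Q ∈ T.tiles, tileDist T P Q ≤ (k : ℕ∞) ∧ IsFaceOf F Q}

/-- The set of all faces of tiles of `T` (the face-lattice of `T`), ordered by inclusion. -/
def facesOf (T : Tiling d) : Set (Set (EucSp d)) :=
  {F | ∃ Q ∈ T.tiles, IsFaceOf F Q}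

/-- An order isomorphism between the `k`-th coronas of `P` and `P'` is an isomorphism of
centered coronas when it maps the center `P` to the center `P'`. -/
def IsCenteredIso (T : Tiling d) (k : ℕ) (P P' : Set (EucSp d))
    (e : ↥(corona T k P) ≃o ↥(corona T k P')) : Prop :=
  ∀ (hP : P ∈ corona T k P) (hP' : P' ∈ corona T k P'), e ⟨P, hP⟩ = ⟨P', hP'⟩

/-- The centered `k`-th coronas `(P, C_k(P))` and `(P', C_k(P'))` are isomorphic. -/
def CoronasIsomorphic (T : Tiling d) (k : ℕ) (P P' : Set (EucSp d)) : Prop :=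
  ∃ e : ↥(corona T k P) ≃o ↥(corona T k P'), IsCenteredIso T k P P' e

/-- `N_k(T)`: the number of isomorphism classes of centered `k`-th coronas of tiles of `T`. -/
def Ncount (T : Tiling d) (k : ℕ) : Cardinal :=
  Cardinal.mk (Quot (fun P Q : ↥T.tiles =>
    CoronasIsomorphic T k (P : Set (EucSp d)) (Q : Set (EucSp d))))

/-- Two tiles are equivalent under the combinatorial automorphism group `Γ(T)`. -/
def TilesEquiv (T : Tiling d) (P Q : Set (EucSp d)) : Prop :=
  ∃ (φ : ↥(facesOf T) ≃o ↥(facesOf T)) (hP : P ∈ facesOf T) (hQ : Q ∈ facesOf T),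
    φ ⟨P, hP⟩ = ⟨Q, hQ⟩

/-- The number of orbits of `Γ(T)` on the tiles of `T`. -/
def orbitCount (T : Tiling d) : Cardinal :=
  Cardinal.mk (Quot (fun P Q : ↥T.tiles =>
    TilesEquiv T (P : Set (EucSp d)) (Q : Set (EucSp d))))

/-- `Γ(C_{k-1}(P)) = Γ(C_k(P))`: every automorphism of the centered `(k-1)`-st corona of `P`
extends to an automorphism of the centered `k`-th corona of `P`. -/
def AutosExtend (T : Tiling d) (k : ℕ) (P : Set (EucSp d)) : Prop :=
  ∀ e : ↥(corona T (k - 1) P) ≃o ↥(corona T (k - 1) P), IsCenteredIso T (k - 1) P P e →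
    ∃ f : ↥(corona T k P) ≃o ↥(corona T k P), IsCenteredIso T k P P f ∧
      ∀ F (hF : F ∈ corona T (k - 1) P) (hF' : F ∈ corona T k P),
        ((f ⟨F, hF'⟩ : Set (EucSp d))) = ((e ⟨F, hF⟩ : Set (EucSp d)))


/-! ### Auxiliary development -/

section PolytopeCore

open Module

variable {d : ℕ}

lemma hull_le_of_forall_le {s : Finset (EucSp d)} {l : EucSp d →L[ℝ] ℝ} {M : ℝ}
    (hle : ∀ a ∈ s, l a ≤ M) : ∀ x ∈ convexHull ℝ (s : Set (EucSp d)), l x ≤ M := by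
  intro x hx
  have hconv : Convex ℝ {w : EucSp d | l w ≤ M} :=
    convex_halfSpace_le (LinearMap.isLinear (l : EucSp d →ₗ[ℝ] ℝ)) M
  exact convexHull_min (fun a ha => hle a ha) hconv hx

lemma hull_ge_of_forall_ge {s : Finset (EucSp d)} {l : EucSp d →L[ℝ] ℝ} {M : ℝ}
    (hge : ∀ a ∈ s, M ≤ l a) : ∀ x ∈ convexHull ℝ (s : Set (EucSp d)), M ≤ l x := by
  intro x hx
  have hconv : Convex ℝ {w : EucSp d | M ≤ l w} :=
    convex_halfSpace_ge (LinearMap.isLinear (l : EucSp d →ₗ[ℝ] ℝ)) M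
  exact convexHull_min (fun a ha => hge a ha) hconv hx

/-- The argmax set of a linear functional on a polytope is the hull of the argmax vertices. -/
lemma exposedSet_eq_convexHull_filter {s : Finset (EucSp d)} {l : EucSp d →L[ℝ] ℝ} {M : ℝ}
    (hle : ∀ a ∈ s, l a ≤ M) (hex : ∃ a ∈ s, l a = M) :
    {x ∈ convexHull ℝ (s : Set (EucSp d)) | ∀ y ∈ convexHull ℝ (s : Set (EucSp d)), l y ≤ l x}
      = convexHull ℝ ((s.filter (fun a => l a = M)) : Set (EucSp d)) := by
  obtain ⟨a₀, ha₀s, ha₀⟩ := hex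
  apply Set.Subset.antisymm
  · rintro x ⟨hx, hmax⟩
    have hxM : l x = M := by
      refine le_antisymm (hull_le_of_forall_le hle x hx) ?_
      have := hmax a₀ (subset_convexHull ℝ _ ha₀s)
      linarith
    rw [Finset.convexHull_eq] at hx
    obtain ⟨w, hw0, hw1, hwx⟩ := hx
    have hsum : ∑ y ∈ s, w y • y = x := by
      rw [← Finset.centerMass_eq_of_sum_1 _ _ hw1]; exact hwx
    have hlx : ∑ y ∈ s, w y * l y = M := by
      have := congrArg l hsum
      rw [map_sum] at this
      simp only [map_smul, smul_eq_mul] at this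
      rw [this, hxM]
    have hzero : ∀ y ∈ s, w y * (M - l y) = 0 := by
      rw [← Finset.sum_eq_zero_iff_of_nonneg]
      · have : ∑ y ∈ s, w y * (M - l y) = M * (∑ y ∈ s, w y) - ∑ y ∈ s, w y * l y := by
          rw [Finset.mul_sum, ← Finset.sum_sub_distrib]
          congr 1; ext y; ring
        rw [this, hw1, hlx]; ring
      · intro y hy
        exact mul_nonneg (hw0 y hy) (by linarith [hle y hy])
    have hvanish : ∀ y ∈ s, y ∉ s.filter (fun a => l a = M) → w y = 0 := by
      intro y hy hyn
      rcases mul_eq_zero.mp (hzero y hy) with h | h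
      · exact h
      · exfalso; exact hyn (Finset.mem_filter.mpr ⟨hy, by linarith⟩)
    rw [Finset.convexHull_eq]
    refine ⟨w, fun y hy => hw0 y (Finset.mem_of_mem_filter y hy), ?_, ?_⟩
    · rw [Finset.sum_subset (Finset.filter_subset _ s) (fun y hy hyn => hvanish y hy hyn)]
      exact hw1
    · rw [Finset.centerMass_eq_of_sum_1]
      · rw [Finset.sum_subset (Finset.filter_subset _ s)
          (fun y hy hyn => by rw [hvanish y hy hyn, zero_smul])]
        simpa using hsum
      · rw [Finset.sum_subset (Finset.filter_subset _ s) (fun y hy hyn => hvanish y hy hyn)]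
        exact hw1
  · intro x hx
    have hxs : x ∈ convexHull ℝ (s : Set (EucSp d)) :=
      convexHull_mono (by exact_mod_cast Finset.filter_subset _ s) hx
    have hxM : M ≤ l x := hull_ge_of_forall_ge
      (fun a ha => le_of_eq (Finset.mem_filter.mp ha).2.symm) x hx
    exact ⟨hxs, fun y hy => le_trans (hull_le_of_forall_le hle y hy) hxM⟩

lemma isExposed_convexHull_filter {s : Finset (EucSp d)} {l : EucSp d →L[ℝ] ℝ} {M : ℝ}
    (hle : ∀ a ∈ s, l a ≤ M) (hex : ∃ a ∈ s, l a = M) :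
    IsExposed ℝ (convexHull ℝ (s : Set (EucSp d)))
      (convexHull ℝ ((s.filter (fun a => l a = M)) : Set (EucSp d))) :=
  fun _ => ⟨l, (exposedSet_eq_convexHull_filter hle hex).symm⟩

/-- Vertex representation of a nonempty exposed face of a polytope. -/
lemma exposed_rep {s : Finset (EucSp d)} {F : Set (EucSp d)}
    (hF : IsExposed ℝ (convexHull ℝ (s : Set (EucSp d))) F) (hne : F.Nonempty) :
    ∃ (l : EucSp d →L[ℝ] ℝ) (M : ℝ), (∀ a ∈ s, l a ≤ M) ∧ (∃ a ∈ s, l a = M) ∧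
      F = convexHull ℝ ((s.filter (fun a => l a = M)) : Set (EucSp d)) := by
  have hs : s.Nonempty := by
    rcases s.eq_empty_or_nonempty with rfl | h
    · exfalso
      have := hne.mono hF.subset
      simp at this
    · exact h
  obtain ⟨l, hFeq⟩ := hF hne
  refine ⟨l, s.sup' hs l, fun a ha => Finset.le_sup' l ha, ?_, ?_⟩
  · obtain ⟨a, ha, hae⟩ := Finset.exists_mem_eq_sup' hs l
    exact ⟨a, ha, hae.symm⟩
  · rw [hFeq]
    exact exposedSet_eq_convexHull_filter (fun a ha => Finset.le_sup' l ha)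
      (by obtain ⟨a, ha, hae⟩ := Finset.exists_mem_eq_sup' hs l; exact ⟨a, ha, hae.symm⟩)

end PolytopeCore

section Transitivity

variable {d : ℕ}

/-- Exposed face of an exposed face of a polytope is an exposed face of the polytope. -/
lemma isExposed_trans_of_polytope {s : Finset (EucSp d)} {G G' : Set (EucSp d)}
    (hG : IsExposed ℝ (convexHull ℝ (s : Set (EucSp d))) G) (hG' : IsExposed ℝ G G') :
    IsExposed ℝ (convexHull ℝ (s : Set (EucSp d))) G' := by
  rcases G'.eq_empty_or_nonempty with rfl | hne'
  · exact isExposed_empty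
  have hGne : G.Nonempty := hne'.mono hG'.subset
  obtain ⟨l, M, hle, hex, hGeq⟩ := exposed_rep hG hGne
  set A := s.filter (fun a => l a = M) with hAdef
  rw [hGeq] at hG'
  obtain ⟨h, N, hle2, hex2, hG'eq⟩ := exposed_rep hG' hne'
  by_cases hall : ∀ a ∈ s, l a = M
  · have hAs : A = s := Finset.filter_eq_self.mpr hall
    rw [hAs] at hG'eq hle2 hex2
    rw [hG'eq]
    exact isExposed_convexHull_filter hle2 hex2
  -- there is a vertex not on the face
  push_neg at hall
  obtain ⟨b₀, hb₀s, hb₀⟩ := hall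
  have hs : s.Nonempty := ⟨b₀, hb₀s⟩
  set sb := s.filter (fun a => ¬ (l a = M)) with hsbdef
  have hsbne : sb.Nonempty := ⟨b₀, Finset.mem_filter.mpr ⟨hb₀s, hb₀⟩⟩
  set δ := sb.inf' hsbne (fun a => M - l a) with hδdef
  have hδpos : 0 < δ := by
    rw [hδdef, Finset.lt_inf'_iff]
    intro a ha
    obtain ⟨has, haM⟩ := Finset.mem_filter.mp ha
    have := hle a has
    cases lt_or_eq_of_le this with
    | inl hlt => linarith
    | inr heq => exact absurd heq haM
  set R := s.sup' hs (fun a => |h a|) with hRdef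
  have hRnn : 0 ≤ R := le_trans (abs_nonneg (h b₀)) (Finset.le_sup' (fun a => |h a|) hb₀s)
  set ε := δ / (2 * R + 1) with hεdef
  have hεpos : 0 < ε := div_pos hδpos (by linarith)
  obtain ⟨a₂, ha₂A, ha₂N⟩ := hex2
  have hNabs : |N| ≤ R := by
    rw [← ha₂N]
    exact Finset.le_sup' (fun a => |h a|) (Finset.mem_of_mem_filter a₂ ha₂A)
  set l' : EucSp d →L[ℝ] ℝ := l + ε • h with hl'def
  have hl'app : ∀ x, l' x = l x + ε * h x := fun x => rfl
  set M' := M + ε * N with hM'def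
  -- key inequality for vertices off the face
  have hoff : ∀ a ∈ s, a ∉ A → l' a < M' := by
    intro a has haA
    have haM : ¬ (l a = M) := fun hc => haA (Finset.mem_filter.mpr ⟨has, hc⟩)
    have hδa : δ ≤ M - l a := Finset.inf'_le _ (Finset.mem_filter.mpr ⟨has, haM⟩)
    have habs : |h a| ≤ R := Finset.le_sup' (fun a => |h a|) has
    have h1 : ε * (h a - N) ≤ ε * (2 * R) := by
      apply mul_le_mul_of_nonneg_left _ (le_of_lt hεpos)
      have := abs_le.mp habs
      have := abs_le.mp hNabs
      linarith
    have h2 : ε * (2 * R) < δ := by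
      rw [hεdef]
      rw [div_mul_eq_mul_div, div_lt_iff₀ (by linarith : (0:ℝ) < 2 * R + 1)]
      nlinarith
    rw [hl'app, hM'def]
    nlinarith
  have honA : ∀ a ∈ A, l' a = M + ε * h a := by
    intro a haA
    rw [hl'app, (Finset.mem_filter.mp haA).2]
  have hle' : ∀ a ∈ s, l' a ≤ M' := by
    intro a has
    by_cases haA : a ∈ A
    · rw [honA a haA, hM'def]
      have : h a ≤ N := hle2 a haA
      nlinarith
    · exact le_of_lt (hoff a has haA)
  have hex' : ∃ a ∈ s, l' a = M' := by
    refine ⟨a₂, Finset.mem_of_mem_filter a₂ ha₂A, ?_⟩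
    rw [honA a₂ ha₂A, ha₂N, hM'def]
  have hfilter : s.filter (fun a => l' a = M') = A.filter (fun a => h a = N) := by
    ext a
    simp only [Finset.mem_filter]
    constructor
    · rintro ⟨has, hal'⟩
      by_cases haA : a ∈ A
      · have := honA a haA
        rw [this, hM'def] at hal'
        have hha : h a = N := by
          have : ε * h a = ε * N := by linarith
          exact mul_left_cancel₀ (ne_of_gt hεpos) this
        exact ⟨haA, hha⟩
      · exact absurd hal' (ne_of_lt (hoff a has haA))
    · rintro ⟨haA, haN⟩
      refine ⟨Finset.mem_of_mem_filter a haA, ?_⟩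
      rw [honA a haA, haN, hM'def]
  have := isExposed_convexHull_filter hle' hex'
  rw [hfilter] at this
  rw [hG'eq]
  exact this

end Transitivity

section Dimension

open Module

variable {d : ℕ}

lemma fdimZ_empty : fdimZ (∅ : Set (EucSp d)) = -1 := if_pos rfl

lemma fdimZ_of_nonempty {F : Set (EucSp d)} (h : F.Nonempty) :
    fdimZ F = (finrank ℝ (affineSpan ℝ F).direction : ℤ) := if_neg h.ne_empty

lemma neg_one_le_fdimZ (F : Set (EucSp d)) : -1 ≤ fdimZ F := by
  rcases F.eq_empty_or_nonempty with rfl | h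
  · rw [fdimZ_empty]
  · rw [fdimZ_of_nonempty h]; omega

lemma fdimZ_nonneg_of_nonempty {F : Set (EucSp d)} (h : F.Nonempty) : 0 ≤ fdimZ F := by
  rw [fdimZ_of_nonempty h]; omega

lemma fdimZ_convexHull_finset {A : Finset (EucSp d)} (hA : A.Nonempty) :
    fdimZ (convexHull ℝ (A : Set (EucSp d)))
      = (finrank ℝ (affineSpan ℝ (A : Set (EucSp d))).direction : ℤ) := by
  have hne : (convexHull ℝ (A : Set (EucSp d))).Nonempty := by
    obtain ⟨a, ha⟩ := hA
    exact ⟨a, subset_convexHull ℝ _ (by exact_mod_cast ha)⟩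
  rw [fdimZ_of_nonempty hne, affineSpan_convexHull]

lemma fdimZ_of_polytope {P : Set (EucSp d)} (hP : IsPolytope d P) : fdimZ P = d := by
  obtain ⟨⟨s, rfl⟩, hint⟩ := hP
  have hconv : Convex ℝ (convexHull ℝ (s : Set (EucSp d))) := convex_convexHull ℝ _
  have htop : affineSpan ℝ (convexHull ℝ (s : Set (EucSp d))) = ⊤ :=
    (hconv.interior_nonempty_iff_affineSpan_eq_top).mp hint
  have hne : (convexHull ℝ (s : Set (EucSp d))).Nonempty :=
    hint.mono interior_subset
  rw [fdimZ_of_nonempty hne, htop, AffineSubspace.direction_top]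
  norm_num [finrank_euclideanSpace_fin]

/-- Moving slightly from an intrinsic-interior point away from a point of the affine span
stays in the set. -/
lemma exists_stretch_mem {A : Set (EucSp d)} {a z : EucSp d}
    (ha : a ∈ intrinsicInterior ℝ A) (hz : z ∈ affineSpan ℝ A) :
    ∃ ε : ℝ, 0 < ε ∧ a + ε • (a - z) ∈ A := by
  obtain ⟨ahat, hahat, hahata⟩ := ha
  have haA : a ∈ A := by
    have := interior_subset hahat
    simp only [Set.mem_preimage] at this
    rwa [hahata] at this
  have haS : a ∈ affineSpan ℝ A := subset_affineSpan ℝ A haA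
  have hdir : a - z ∈ (affineSpan ℝ A).direction := by
    have := AffineSubspace.vsub_mem_direction haS hz
    rwa [vsub_eq_sub] at this
  have hmem : ∀ t : ℝ, a + t • (a - z) ∈ affineSpan ℝ A := by
    intro t
    have : (t • (a - z)) +ᵥ a ∈ affineSpan ℝ A :=
      AffineSubspace.vadd_mem_of_mem_direction (Submodule.smul_mem _ t hdir) haS
    simpa [vadd_eq_add, add_comm] using this
  set γ : ℝ → {x : EucSp d // x ∈ affineSpan ℝ A} := fun t => ⟨a + t • (a - z), hmem t⟩ with hγ
  have hγcont : Continuous γ := by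
    apply Continuous.subtype_mk
    exact continuous_const.add (continuous_id'.smul continuous_const)
  have hγ0 : γ 0 = ahat := by
    apply Subtype.ext
    simp [hγ, hahata]
  have hnb : γ ⁻¹' (interior ((Subtype.val) ⁻¹' A : Set {x : EucSp d // x ∈ affineSpan ℝ A})) ∈ nhds (0 : ℝ) := by
    apply hγcont.continuousAt.preimage_mem_nhds
    rw [hγ0]
    exact isOpen_interior.mem_nhds hahat
  obtain ⟨r, hrpos, hball⟩ := Metric.mem_nhds_iff.mp hnb
  refine ⟨r / 2, by linarith, ?_⟩
  have hmemball : (r / 2 : ℝ) ∈ Metric.ball (0 : ℝ) r := by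
    rw [Metric.mem_ball, Real.dist_eq, sub_zero, abs_of_pos (by linarith)]
    linarith
  have := hball hmemball
  have h2 := interior_subset this
  simpa using h2

/-- A proper extreme subset of a convex set has strictly smaller dimension. -/
lemma fdimZ_lt_of_extreme {A B : Set (EucSp d)} (hAconv : Convex ℝ A)
    (hex : IsExtreme ℝ B A) (hne : A ≠ B) : fdimZ A < fdimZ B := by
  have hAB : A ⊆ B := hex.1
  rcases A.eq_empty_or_nonempty with rfl | hAne
  · have hBne : B.Nonempty := by
      rcases B.eq_empty_or_nonempty with rfl | h
      · exact absurd rfl hne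
      · exact h
    rw [fdimZ_empty]
    have := fdimZ_nonneg_of_nonempty hBne
    omega
  by_cases hspan : affineSpan ℝ A = affineSpan ℝ B
  · exfalso
    obtain ⟨x, hxB, hxA⟩ := Set.exists_of_ssubset (hAB.ssubset_of_ne hne)
    obtain ⟨a, ha⟩ := Set.Nonempty.intrinsicInterior hAconv hAne
    have hxspan : x ∈ affineSpan ℝ A := by
      rw [hspan]; exact subset_affineSpan ℝ B hxB
    obtain ⟨ε, hεpos, hyA⟩ := exists_stretch_mem ha hxspan
    set y := a + ε • (a - x) with hy
    have haseg : a ∈ openSegment ℝ x y := by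
      refine ⟨ε / (1 + ε), 1 / (1 + ε), by positivity, by positivity, ?_, ?_⟩
      · field_simp
        try ring
      · rw [hy]
        match_scalars <;> field_simp <;> ring
    have := hex.2 hxB (hAB hyA) (intrinsicInterior_subset ha) haseg
    exact hxA this
  · have hle : affineSpan ℝ A ≤ affineSpan ℝ B := affineSpan_mono ℝ hAB
    have hBne : B.Nonempty := hAne.mono hAB
    have hlt : (affineSpan ℝ A).direction < (affineSpan ℝ B).direction := by
      refine lt_of_le_of_ne (AffineSubspace.direction_le hle) ?_
      intro hdir
      apply hspan
      apply AffineSubspace.ext_of_direction_eq hdir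
      obtain ⟨a, haA⟩ := hAne
      exact ⟨a, subset_affineSpan ℝ _ haA, subset_affineSpan ℝ _ (hAB haA)⟩
    rw [fdimZ_of_nonempty hAne, fdimZ_of_nonempty hBne]
    exact_mod_cast Submodule.finrank_lt_finrank_of_lt hlt

end Dimension

section Rotation

open Module

variable {d : ℕ}

lemma hull_filter_subset_hyperplane {s : Finset (EucSp d)} {l : EucSp d →L[ℝ] ℝ} {M : ℝ} :
    convexHull ℝ ((s.filter fun a => l a = M : Finset (EucSp d)) : Set (EucSp d))
      ⊆ {x | l x = M} := by
  apply convexHull_min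
  · intro a ha
    exact (Finset.mem_filter.mp (by exact_mod_cast ha)).2
  · exact convex_hyperplane (LinearMap.isLinear (l : EucSp d →ₗ[ℝ] ℝ)) M

lemma exists_clm_eq_zero_pos {V : Submodule ℝ (EucSp d)} {x : EucSp d} (hx : x ∉ V) :
    ∃ φ : EucSp d →L[ℝ] ℝ, (∀ v ∈ V, φ v = 0) ∧ 0 < φ x := by
  set p : EucSp d := (V.orthogonalProjectionOnto x : EucSp d) with hp
  set u : EucSp d := x - p with hu
  have humem : u ∈ Vᗮ := V.sub_starProjection_mem_orthogonal x
  rw [Submodule.mem_orthogonal] at humem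
  have hune : u ≠ 0 := by
    intro h0
    apply hx
    have hxp : x = p := by rwa [hu, sub_eq_zero] at h0
    rw [hxp, hp]
    exact SetLike.coe_mem _
  refine ⟨innerSL ℝ u, fun v hv => ?_, ?_⟩
  · rw [innerSL_apply_apply, real_inner_comm]
    exact humem v hv
  · have hx' : x = u + p := by rw [hu]; abel
    have h2 : (inner ℝ u p : ℝ) = 0 := by
      have := humem p (SetLike.coe_mem _)
      rwa [real_inner_comm] at this
    have h1 : (innerSL ℝ u) x = (inner ℝ u u : ℝ) := by
      rw [hx']
      simp only [innerSL_apply_apply, inner_add_right, h2, add_zero]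
    rw [h1, real_inner_self_eq_norm_mul_norm]
    have := norm_pos_iff.mpr hune
    positivity

set_option maxHeartbeats 2000000 in
/-- Rotation of a supporting hyperplane: an exposed face of codimension at least 2
is strictly contained in a proper exposed face. -/
lemma exists_strict_intermediate_face {s : Finset (EucSp d)} {F : Set (EucSp d)}
    (hF : IsExposed ℝ (convexHull ℝ (s : Set (EucSp d))) F)
    (hdim : fdimZ F ≤ fdimZ (convexHull ℝ (s : Set (EucSp d))) - 2) :
    ∃ G, IsExposed ℝ (convexHull ℝ (s : Set (EucSp d))) G ∧ F ⊂ G ∧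
      G ⊂ convexHull ℝ (s : Set (EucSp d)) := by
  rcases s.eq_empty_or_nonempty with rfl | hs
  · exfalso
    rw [show ((∅ : Finset (EucSp d)) : Set (EucSp d)) = (∅ : Set (EucSp d)) by simp,
      convexHull_empty, fdimZ_empty] at hdim
    have := neg_one_le_fdimZ F
    omega
  rcases F.eq_empty_or_nonempty with rfl | hFne
  · -- produce a nonempty proper exposed face
    rw [fdimZ_empty] at hdim
    have hQdim := fdimZ_convexHull_finset hs
    have hvert : ∃ x ∈ s, ∃ y ∈ s, x ≠ y := by
      by_contra hcon
      push_neg at hcon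
      obtain ⟨a, has⟩ := hs
      have hsub : (s : Set (EucSp d)) ⊆ ({a} : Set (EucSp d)) := by
        intro z hz
        exact hcon z (by exact_mod_cast hz) a has
      have hv := vectorSpan_mono ℝ hsub
      rw [vectorSpan_singleton] at hv
      have hvbot : vectorSpan ℝ (s : Set (EucSp d)) = ⊥ := le_bot_iff.mp hv
      rw [hQdim, direction_affineSpan, hvbot] at hdim
      norm_num at hdim
    obtain ⟨x, hxs, y, hys, hxy⟩ := hvert
    set l : EucSp d →L[ℝ] ℝ := innerSL ℝ (x - y) with hl
    have hlxy : l y < l x := by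
      have : l x - l y = (inner ℝ (x - y) (x - y) : ℝ) := by
        simp only [hl, innerSL_apply_apply, ← inner_sub_right]
      have hpos : (0:ℝ) < inner ℝ (x - y) (x - y) := by
        rw [real_inner_self_eq_norm_mul_norm]
        have := norm_pos_iff.mpr (sub_ne_zero.mpr hxy)
        positivity
      linarith
    set M := s.sup' hs l with hM
    have hle : ∀ a ∈ s, l a ≤ M := fun a ha => Finset.le_sup' l ha
    obtain ⟨aM, haMs, haM⟩ := Finset.exists_mem_eq_sup' hs l
    have hex : ∃ a ∈ s, l a = M := ⟨aM, haMs, haM.symm⟩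
    refine ⟨convexHull ℝ ((s.filter fun a => l a = M : Finset _) : Set (EucSp d)),
      isExposed_convexHull_filter hle hex, ?_, ?_⟩
    · rw [Set.ssubset_iff_of_subset (Set.empty_subset _)]
      exact ⟨aM, subset_convexHull ℝ _ (by
        exact_mod_cast Finset.mem_filter.mpr ⟨haMs, haM.symm⟩), Set.notMem_empty _⟩
    · refine (convexHull_mono (by exact_mod_cast Finset.filter_subset _ s)).ssubset_of_ne ?_
      intro hcontra
      have hyG : y ∈ convexHull ℝ ((s.filter fun a => l a = M : Finset _) : Set (EucSp d)) := by
        rw [hcontra]; exact subset_convexHull ℝ _ (by exact_mod_cast hys)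
      have := hull_filter_subset_hyperplane hyG
      simp only [Set.mem_setOf_eq] at this
      have := hle x hxs
      linarith
  -- main case : F nonempty
  obtain ⟨l, M, hle, hex, hFeq⟩ := exposed_rep hF hFne
  set A := s.filter (fun a => l a = M) with hAdef
  have hAne : A.Nonempty := by
    rcases A.eq_empty_or_nonempty with h | h
    · exfalso
      rw [hFeq, h] at hFne
      simp at hFne
    · exact h
  obtain ⟨a₀, ha₀A⟩ := hAne
  have ha₀s : a₀ ∈ s := Finset.mem_of_mem_filter _ ha₀A
  set S₀ := affineSpan ℝ (A : Set (EucSp d)) with hS₀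
  set V := S₀.direction with hV
  have ha₀S₀ : a₀ ∈ S₀ := subset_affineSpan ℝ _ (by exact_mod_cast ha₀A)
  have hdimF : fdimZ F = (finrank ℝ V : ℤ) := by
    rw [hFeq]; exact fdimZ_convexHull_finset ⟨a₀, ha₀A⟩
  have hdimQ := fdimZ_convexHull_finset hs
  have hb : ∃ b ∈ s, b ∉ S₀ := by
    by_contra hcon; push_neg at hcon
    have hle' : affineSpan ℝ (s : Set (EucSp d)) ≤ S₀ :=
      affineSpan_le.mpr (fun z hz => hcon z (by exact_mod_cast hz))
    have hfr : finrank ℝ (affineSpan ℝ (s : Set (EucSp d))).direction ≤ finrank ℝ V :=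
      Submodule.finrank_mono (AffineSubspace.direction_le hle')
    omega
  obtain ⟨b, hbs, hbS₀⟩ := hb
  set S₁ := affineSpan ℝ (insert b (A : Set (EucSp d))) with hS₁
  have ha₀S₁ : a₀ ∈ S₁ := subset_affineSpan ℝ _ (Set.mem_insert_of_mem _ (by exact_mod_cast ha₀A))
  have hbS₁ : b ∈ S₁ := subset_affineSpan ℝ _ (Set.mem_insert _ _)
  have hS₁dir : S₁.direction = Submodule.span ℝ {b -ᵥ a₀} ⊔ V := by
    rw [hS₁, ← affineSpan_insert_affineSpan ℝ b (A : Set (EucSp d))]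
    exact AffineSubspace.direction_affineSpan_insert ha₀S₀
  have hS₁rank : finrank ℝ S₁.direction ≤ finrank ℝ V + 1 := by
    rw [hS₁dir]
    have h1 := Submodule.finrank_add_le_finrank_add_finrank
      (Submodule.span ℝ ({b -ᵥ a₀} : Set (EucSp d))) V
    have h2 : finrank ℝ (Submodule.span ℝ ({b -ᵥ a₀} : Set (EucSp d))) ≤ 1 := by
      by_cases hbz : (b -ᵥ a₀ : EucSp d) = 0
      · rw [hbz, Submodule.span_zero_singleton]
        simp
      · rw [finrank_span_singleton hbz]
    omega
  have hc : ∃ c ∈ s, c ∉ S₁ := by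
    by_contra hcon; push_neg at hcon
    have hle' : affineSpan ℝ (s : Set (EucSp d)) ≤ S₁ :=
      affineSpan_le.mpr (fun z hz => hcon z (by exact_mod_cast hz))
    have hfr : finrank ℝ (affineSpan ℝ (s : Set (EucSp d))).direction ≤ finrank ℝ S₁.direction :=
      Submodule.finrank_mono (AffineSubspace.direction_le hle')
    omega
  obtain ⟨c, hcs, hcS₁⟩ := hc
  have hbV : b - a₀ ∉ V := by
    intro hmem
    apply hbS₀
    have hiff := AffineSubspace.vsub_right_mem_direction_iff_mem ha₀S₀ b
    rw [vsub_eq_sub] at hiff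
    exact hiff.mp hmem
  obtain ⟨φ₁, hφ₁V, hφ₁b⟩ := exists_clm_eq_zero_pos hbV
  have hcV₁ : c - a₀ ∉ S₁.direction := by
    intro hmem
    apply hcS₁
    have hiff := AffineSubspace.vsub_right_mem_direction_iff_mem ha₀S₁ c
    rw [vsub_eq_sub] at hiff
    exact hiff.mp hmem
  obtain ⟨φ₂, hφ₂V₁, hφ₂c⟩ := exists_clm_eq_zero_pos hcV₁
  have hVle : V ≤ S₁.direction := by
    rw [hV, hS₀]
    exact AffineSubspace.direction_le (affineSpan_mono ℝ (Set.subset_insert _ _))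
  have hφ₂b : φ₂ (b - a₀) = 0 := by
    apply hφ₂V₁
    have := AffineSubspace.vsub_mem_direction hbS₁ ha₀S₁
    rwa [vsub_eq_sub] at this
  set t : ℝ := (|φ₁ (c - a₀)| + 1) / (φ₂ (c - a₀)) with ht
  set h : EucSp d →L[ℝ] ℝ := φ₁ - t • φ₂ with hh
  have happ : ∀ x, h x = φ₁ x - t * φ₂ x := fun x => rfl
  have hhV : ∀ v ∈ V, h v = 0 := fun v hv => by
    rw [happ, hφ₁V v hv, hφ₂V₁ v (hVle hv)]; ring
  have hhb : 0 < h (b - a₀) := by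
    rw [happ, hφ₂b]; simpa using hφ₁b
  have hhc : h (c - a₀) < 0 := by
    rw [happ, ht, div_mul_cancel₀ _ (ne_of_gt hφ₂c)]
    have h1 := le_abs_self (φ₁ (c - a₀))
    linarith
  have hhA : ∀ a ∈ A, h (a - a₀) = 0 := by
    intro a haA
    apply hhV
    rw [hV]
    have hmem : a ∈ S₀ := subset_affineSpan ℝ _ (by exact_mod_cast haA)
    have := AffineSubspace.vsub_mem_direction hmem ha₀S₀
    rwa [vsub_eq_sub] at this
  set Pf := s.filter (fun a => 0 < h (a - a₀)) with hPf
  have hbPf : b ∈ Pf := Finset.mem_filter.mpr ⟨hbs, hhb⟩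
  have hPfne : Pf.Nonempty := ⟨b, hbPf⟩
  have hPfnA : ∀ a ∈ Pf, a ∉ A := by
    intro a haPf haA
    have h1 := hhA a haA
    have h2 := (Finset.mem_filter.mp haPf).2
    linarith
  have hlltM : ∀ a ∈ s, a ∉ A → l a < M := by
    intro a has haA
    rcases lt_or_eq_of_le (hle a has) with h' | h'
    · exact h'
    · exact absurd (Finset.mem_filter.mpr ⟨has, h'⟩) haA
  set tstar := Pf.inf' hPfne (fun a => (M - l a) / h (a - a₀)) with htstar
  have htstarpos : 0 < tstar := by
    rw [htstar, Finset.lt_inf'_iff]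
    intro a haPf
    have h1 := (Finset.mem_filter.mp haPf).2
    have h2 := hlltM a (Finset.mem_of_mem_filter _ haPf) (hPfnA a haPf)
    exact div_pos (by linarith) h1
  set l2 : EucSp d →L[ℝ] ℝ := l + tstar • h with hl2
  have hl2app : ∀ x, l2 x = l x + tstar * h x := fun x => rfl
  set M2 := M + tstar * h a₀ with hM2
  have hsplit : ∀ x : EucSp d, h x = h (x - a₀) + h a₀ := by
    intro x; rw [map_sub]; ring
  have honA : ∀ a ∈ A, l2 a = M2 := by
    intro a haA
    rw [hl2app, hsplit a, hhA a haA, (Finset.mem_filter.mp haA).2, hM2]; ring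
  have hle2 : ∀ a ∈ s, l2 a ≤ M2 := by
    intro a has
    by_cases haA : a ∈ A
    · exact le_of_eq (honA a haA)
    · have hlalt := hlltM a has haA
      by_cases hpos : 0 < h (a - a₀)
      · have haPf : a ∈ Pf := Finset.mem_filter.mpr ⟨has, hpos⟩
        have hinf : tstar ≤ (M - l a) / h (a - a₀) :=
          Finset.inf'_le _ haPf
        have hmul : tstar * h (a - a₀) ≤ M - l a := (le_div_iff₀ hpos).mp hinf
        rw [hl2app, hsplit a, hM2, mul_add]
        linarith
      · push_neg at hpos
        have hmul : tstar * h (a - a₀) ≤ 0 := mul_nonpos_of_nonneg_of_nonpos (le_of_lt htstarpos) hpos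
        rw [hl2app, hsplit a, hM2, mul_add]
        linarith
  have hex2 : ∃ a ∈ s, l2 a = M2 := ⟨a₀, ha₀s, honA a₀ ha₀A⟩
  set A2 := s.filter (fun a => l2 a = M2) with hA2
  have hexp : IsExposed ℝ (convexHull ℝ (s : Set (EucSp d))) (convexHull ℝ (A2 : Set (EucSp d))) :=
    isExposed_convexHull_filter hle2 hex2
  obtain ⟨bs, hbsPf, hbst⟩ := Finset.exists_mem_eq_inf' hPfne (fun a => (M - l a) / h (a - a₀))
  have hbspos := (Finset.mem_filter.mp hbsPf).2
  have hbss : bs ∈ s := Finset.mem_of_mem_filter _ hbsPf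
  have hbsmul : tstar * h (bs - a₀) = M - l bs := by
    rw [htstar, hbst]
    exact div_mul_cancel₀ _ (ne_of_gt hbspos)
  have hbsA2 : bs ∈ A2 := by
    refine Finset.mem_filter.mpr ⟨hbss, ?_⟩
    rw [hl2app, hsplit bs, hM2, mul_add]
    linarith [hbsmul]
  have hAA2 : A ⊆ A2 := fun a haA =>
    Finset.mem_filter.mpr ⟨Finset.mem_of_mem_filter _ haA, honA a haA⟩
  have hlbs : l bs < M := hlltM bs hbss (hPfnA bs hbsPf)
  have hsubF : F ⊆ {x | l x = M} := by
    rw [hFeq]; exact hull_filter_subset_hyperplane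
  have hsubG : convexHull ℝ (A2 : Set (EucSp d)) ⊆ {x | l2 x = M2} :=
    hull_filter_subset_hyperplane
  have hl2c : l2 c < M2 := by
    have hlec := hle c hcs
    have hneg : tstar * h (c - a₀) < 0 := mul_neg_of_pos_of_neg htstarpos hhc
    rw [hl2app, hsplit c, hM2, mul_add]
    linarith
  have hA2sub : A2 ⊆ s := Finset.filter_subset _ s
  clear_value A2 M2 l2 tstar Pf h t S₁ V S₀ A
  have hsub1 : F ⊆ convexHull ℝ (A2 : Set (EucSp d)) := by
    rw [hFeq]
    exact convexHull_mono (Finset.coe_subset.mpr hAA2)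
  have hbsG : bs ∈ convexHull ℝ (A2 : Set (EucSp d)) :=
    subset_convexHull ℝ _ (Finset.mem_coe.mpr hbsA2)
  have hbsnF : bs ∉ F := by
    intro hbsF
    have h9 := hsubF hbsF
    simp only [Set.mem_setOf_eq] at h9
    linarith
  have hsub2 : convexHull ℝ (A2 : Set (EucSp d)) ⊆ convexHull ℝ (s : Set (EucSp d)) :=
    convexHull_mono (Finset.coe_subset.mpr hA2sub)
  have hcQ : c ∈ convexHull ℝ (s : Set (EucSp d)) :=
    subset_convexHull ℝ _ (Finset.mem_coe.mpr hcs)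
  have hcnG : c ∉ convexHull ℝ (A2 : Set (EucSp d)) := by
    intro hcG
    have h9 := hsubG hcG
    simp only [Set.mem_setOf_eq] at h9
    linarith
  refine ⟨convexHull ℝ (A2 : Set (EucSp d)), hexp, ?_, ?_⟩
  · exact hsub1.ssubset_of_ne (fun heq => hbsnF (by rw [heq]; exact hbsG))
  · exact hsub2.ssubset_of_ne (fun heq => hcnG (by rw [heq]; exact hcQ))

end Rotation

section ChainTwo

variable {d : ℕ}

/-- A face of codimension at least 3 admits two strictly intermediate proper exposed faces. -/
lemma exists_chain_two {s : Finset (EucSp d)} {F : Set (EucSp d)}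
    (hF : IsExposed ℝ (convexHull ℝ (s : Set (EucSp d))) F)
    (hdim : fdimZ F ≤ fdimZ (convexHull ℝ (s : Set (EucSp d))) - 3) :
    ∃ G₁ G₂ : Set (EucSp d), IsExposed ℝ (convexHull ℝ (s : Set (EucSp d))) G₁ ∧
      IsExposed ℝ (convexHull ℝ (s : Set (EucSp d))) G₂ ∧
      F ⊂ G₁ ∧ G₁ ⊂ G₂ ∧ G₂ ⊂ convexHull ℝ (s : Set (EucSp d)) := by
  obtain ⟨G₁, hG₁exp, hFG₁, hG₁Q⟩ := exists_strict_intermediate_face hF (by omega)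
  by_cases hd1 : fdimZ G₁ ≤ fdimZ (convexHull ℝ (s : Set (EucSp d))) - 2
  · obtain ⟨G₂, hexp2, h12, h2Q⟩ := exists_strict_intermediate_face hG₁exp hd1
    exact ⟨G₁, G₂, hG₁exp, hexp2, hFG₁, h12, h2Q⟩
  · push_neg at hd1
    have hG₁ne : G₁.Nonempty := by
      rcases G₁.eq_empty_or_nonempty with rfl | h
      · exfalso
        rw [fdimZ_empty] at hd1
        have h1 := neg_one_le_fdimZ F
        omega
    
      · exact h
    obtain ⟨l1, M1, hle1, hex1, hG₁eq⟩ := exposed_rep hG₁exp hG₁ne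
    have hFG₁exp : IsExposed ℝ G₁ F := hF.mono hG₁Q.subset hFG₁.subset
    have hd2 : fdimZ F ≤ fdimZ G₁ - 2 := by omega
    rw [hG₁eq] at hFG₁exp hd2
    obtain ⟨G₀, hG₀exp, hFG₀, hG₀G₁⟩ := exists_strict_intermediate_face hFG₁exp hd2
    have hG₀expQ : IsExposed ℝ (convexHull ℝ (s : Set (EucSp d))) G₀ := by
      apply isExposed_trans_of_polytope (s := s) hG₁exp
      rw [hG₁eq]
      exact hG₀exp
    refine ⟨G₀, G₁, hG₀expQ, hG₁exp, hFG₀, ?_, hG₁Q⟩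
    rw [hG₁eq]
    exact hG₀G₁

end ChainTwo

section TilingBasics

variable {d : ℕ} {T : Tiling d} {P Q Q' F R : Set (EucSp d)} {k : ℕ}

lemma Tiling.tile_convex (T : Tiling d) (hP : P ∈ T.tiles) : Convex ℝ P := by
  obtain ⟨⟨s, rfl⟩, -⟩ := T.polytope P hP
  exact convex_convexHull ℝ _

lemma Tiling.tile_nonempty (T : Tiling d) (hP : P ∈ T.tiles) : P.Nonempty :=
  (T.polytope P hP).2.mono interior_subset

lemma Tiling.tile_finset (T : Tiling d) (hP : P ∈ T.tiles) :
    ∃ s : Finset (EucSp d), s.Nonempty ∧ P = convexHull ℝ (s : Set (EucSp d)) := by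
  obtain ⟨⟨s, rfl⟩, hint⟩ := T.polytope P hP
  refine ⟨s, ?_, rfl⟩
  rcases s.eq_empty_or_nonempty with rfl | h
  · exfalso
    simp only [Finset.coe_empty, convexHull_empty, interior_empty] at hint
    exact Set.not_nonempty_empty hint
  · exact h

lemma Tiling.tile_eq_of_subset (T : Tiling d) (hP : P ∈ T.tiles) (hQ : Q ∈ T.tiles)
    (hsub : P ⊆ Q) : P = Q := by
  by_contra hne
  have hdisj := T.disjointInteriors P hP Q hQ hne
  obtain ⟨x, hx⟩ := (T.polytope P hP).2
  have hx' : x ∈ interior Q := interior_mono hsub hx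
  have : x ∈ interior P ∩ interior Q := ⟨hx, hx'⟩
  rw [hdisj] at this
  exact this

lemma tileChain_self (hP : P ∈ T.tiles) : TileChain T P P 0 :=
  ⟨fun _ => P, rfl, rfl, fun _ _ => hP, fun j h1 h0 => absurd (le_trans h1 h0) (by omega)⟩

lemma tileDist_le_iff {n : ℕ} :
    tileDist T P Q ≤ (n : ℕ∞) ↔ ∃ m : ℕ, m ≤ n ∧ TileChain T P Q m := by
  constructor
  · intro hle
    by_contra hcon
    push_neg at hcon
    have hlb : ∀ x ∈ {x : ℕ∞ | ∃ m : ℕ, x = (m : ℕ∞) ∧ TileChain T P Q m},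
        ((n : ℕ∞) + 1) ≤ x := by
      rintro x ⟨m, rfl, hchain⟩
      have h1 : ¬ m ≤ n := fun hmn => hcon m hmn hchain
      have h2 : n + 1 ≤ m := by omega
      exact_mod_cast h2
    have h3 : ((n : ℕ∞) + 1) ≤ tileDist T P Q := le_sInf hlb
    have h4 : ((n : ℕ∞) + 1) ≤ (n : ℕ∞) := le_trans h3 hle
    have h5 : ((n : ℕ∞)) < (n : ℕ∞) + 1 := by
      have : ((n : ℕ∞)) < ((n + 1 : ℕ) : ℕ∞) := by exact_mod_cast Nat.lt_succ_self n
      simpa using this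
    exact absurd h4 (not_le.mpr h5)
  · rintro ⟨m, hmn, hchain⟩
    have hmem : (m : ℕ∞) ∈ {x : ℕ∞ | ∃ m' : ℕ, x = (m' : ℕ∞) ∧ TileChain T P Q m'} :=
      ⟨m, rfl, hchain⟩
    exact le_trans (sInf_le hmem) (by exact_mod_cast hmn)

lemma self_mem_corona (hP : P ∈ T.tiles) (k : ℕ) : P ∈ corona T k P :=
  ⟨P, hP, tileDist_le_iff.mpr ⟨0, Nat.zero_le _, tileChain_self hP⟩, IsExposed.refl P⟩

lemma corona_mono {k k' : ℕ} (hkk : k ≤ k') (P : Set (EucSp d)) :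
    corona T k P ⊆ corona T k' P := by
  rintro F ⟨Q, hQ, hdist, hface⟩
  exact ⟨Q, hQ, le_trans hdist (by exact_mod_cast hkk), hface⟩

lemma corona_convex (hF : F ∈ corona T k P) : Convex ℝ F := by
  obtain ⟨Q, hQ, -, hface⟩ := hF
  exact hface.convex (T.tile_convex hQ)

lemma tile_isMax {x : ↥(corona T k P)} (hx : (x : Set (EucSp d)) ∈ T.tiles) : IsMax x := by
  rintro ⟨G, hG⟩ hle
  obtain ⟨S, hS, hdistS, hfaceS⟩ := hG
  have h1 : (x : Set (EucSp d)) ⊆ G := hle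
  have h2 : G ⊆ S := hfaceS.subset
  have h3 : (x : Set (EucSp d)) = S := T.tile_eq_of_subset hx hS (h1.trans h2)
  show G ⊆ (x : Set (EucSp d))
  rw [h3]
  exact h2

lemma isMax_tile {x : ↥(corona T k P)} (hx : IsMax x) : (x : Set (EucSp d)) ∈ T.tiles := by
  obtain ⟨S, hS, hdistS, hfaceS⟩ := x.2
  have hmem : S ∈ corona T k P := ⟨S, hS, hdistS, IsExposed.refl S⟩
  have hxS : x ≤ ⟨S, hmem⟩ := hfaceS.subset
  have hSx : (⟨S, hmem⟩ : ↥(corona T k P)) ≤ x := hx hxS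
  have : (x : Set (EucSp d)) = S := le_antisymm hfaceS.subset hSx
  rw [this]
  exact hS

lemma tile_dist_of_mem_corona (hQc : Q ∈ corona T k P) (hQt : Q ∈ T.tiles) :
    tileDist T P Q ≤ (k : ℕ∞) := by
  obtain ⟨S, hS, hdist, hface⟩ := hQc
  have : Q = S := T.tile_eq_of_subset hQt hS hface.subset
  rw [this]
  exact hdist

lemma inter_mem_corona (hQ : Q ∈ T.tiles) (hQ' : Q' ∈ T.tiles)
    (hdist : tileDist T P Q' ≤ (k : ℕ∞)) : Q ∩ Q' ∈ corona T k P :=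
  ⟨Q', hQ', hdist, (T.faceToFace Q hQ Q' hQ').2⟩

lemma corona_extreme_in_tile (hF : F ∈ corona T k P) (hQ : Q ∈ T.tiles) (hsub : F ⊆ Q) :
    IsExtreme ℝ Q F := by
  obtain ⟨S, hS, -, hface⟩ := hF
  have h1 : IsExtreme ℝ S F := hface.isExtreme
  have h2 : F ⊆ S ∩ Q := Set.subset_inter hface.subset hsub
  have h3 : IsExtreme ℝ (S ∩ Q) F := h1.mono Set.inter_subset_left h2
  have h4 : IsExtreme ℝ Q (S ∩ Q) := ((T.faceToFace S hS Q hQ).2).isExtreme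
  exact h4.trans h3

lemma isFaceOf_tile_of_subset (hF : F ∈ corona T k P) (hR : R ∈ T.tiles) (hsub : F ⊆ R) :
    IsFaceOf F R := by
  rcases F.eq_empty_or_nonempty with rfl | hne
  · exact isExposed_empty
  obtain ⟨S, hS, -, hface⟩ := hF
  have h2 : F ⊆ S ∩ R := Set.subset_inter hface.subset hsub
  have h3 : IsExposed ℝ (S ∩ R) F := hface.mono Set.inter_subset_left h2
  have h4 : IsFaceOf (S ∩ R) R := (T.faceToFace S hS R hR).2
  obtain ⟨r, hrne, hreq⟩ := T.tile_finset hR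
  unfold IsFaceOf
  have h4' : IsExposed ℝ (convexHull ℝ (r : Set (EucSp d))) (S ∩ R) := by
    rw [← hreq]; exact h4
  rw [hreq]
  exact isExposed_trans_of_polytope h4' h3

/-- Order-theoretic characterization of the distance-condition `dim (Q ∩ Q') ≥ d - 2`. -/
lemma dim_inter_ge_iff_no_chain (hQ : Q ∈ T.tiles) (hQ' : Q' ∈ T.tiles)
    (hdQ : tileDist T P Q ≤ (k : ℕ∞)) (hdQ' : tileDist T P Q' ≤ (k : ℕ∞)) :
    ((d : ℤ) - 2 ≤ fdimZ (Q ∩ Q')) ↔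
      ¬ ∃ G₁ ∈ corona T k P, ∃ G₂ ∈ corona T k P,
        Q ∩ Q' ⊂ G₁ ∧ G₁ ⊂ G₂ ∧ G₂ ⊂ Q := by
  constructor
  · rintro hdim ⟨G₁, hG₁, G₂, hG₂, h01, h12, h2Q⟩
    have hQdim : fdimZ Q = d := fdimZ_of_polytope (T.polytope Q hQ)
    have hG₂Q : IsExtreme ℝ Q G₂ := corona_extreme_in_tile hG₂ hQ h2Q.subset
    have hG₁Q : IsExtreme ℝ Q G₁ :=
      corona_extreme_in_tile hG₁ hQ (h12.subset.trans h2Q.subset)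
    have hIQ : IsExtreme ℝ Q (Q ∩ Q') := ((T.faceToFace Q hQ Q' hQ').1).isExtreme
    have e1 : IsExtreme ℝ G₁ (Q ∩ Q') := hIQ.mono hG₁Q.1 h01.subset
    have e2 : IsExtreme ℝ G₂ G₁ := hG₁Q.mono hG₂Q.1 h12.subset
    have hIconv : Convex ℝ (Q ∩ Q') := (T.tile_convex hQ).inter (T.tile_convex hQ')
    have d1 : fdimZ (Q ∩ Q') < fdimZ G₁ := fdimZ_lt_of_extreme hIconv e1 h01.ne
    have d2 : fdimZ G₁ < fdimZ G₂ := fdimZ_lt_of_extreme (corona_convex hG₁) e2 h12.ne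
    have d3 : fdimZ G₂ < fdimZ Q := fdimZ_lt_of_extreme (corona_convex hG₂) hG₂Q h2Q.ne
    omega
  · intro hnochain
    by_contra hlt
    push_neg at hlt
    obtain ⟨s, hsne, hQeq⟩ := T.tile_finset hQ
    have hface : IsExposed ℝ (convexHull ℝ (s : Set (EucSp d))) (Q ∩ Q') := by
      rw [← hQeq]; exact (T.faceToFace Q hQ Q' hQ').1
    have hQdim : fdimZ Q = d := fdimZ_of_polytope (T.polytope Q hQ)
    have hdim3 : fdimZ (Q ∩ Q') ≤ fdimZ (convexHull ℝ (s : Set (EucSp d))) - 3 := by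
      rw [← hQeq]
      omega
    obtain ⟨G₁, G₂, hx1, hx2, h01, h12, h2Q⟩ := exists_chain_two hface hdim3
    apply hnochain
    rw [← hQeq] at hx1 hx2 h2Q
    exact ⟨G₁, ⟨Q, hQ, hdQ, hx1⟩, G₂, ⟨Q, hQ, hdQ, hx2⟩, h01, h12, h2Q⟩

end TilingBasics

section Transfer

variable {d : ℕ} {T : Tiling d} {P P' : Set (EucSp d)} {k : ℕ}

lemma orderIso_isMax {α β : Type*} [Preorder α] [Preorder β] (e : α ≃o β) {x : α}
    (hx : IsMax x) : IsMax (e x) := by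
  intro b hb
  have h1 : x ≤ e.symm b := by
    rw [← e.symm_apply_apply x]
    exact e.symm.monotone hb
  have h2 := hx h1
  calc b = e (e.symm b) := (e.apply_symm_apply b).symm
    _ ≤ e x := e.monotone h2

lemma orderIso_map_inter (e : ↥(corona T k P) ≃o ↥(corona T k P'))
    {x y : ↥(corona T k P)}
    (hxy : (x : Set (EucSp d)) ∩ (y : Set (EucSp d)) ∈ corona T k P)
    (hexy : (e x : Set (EucSp d)) ∩ (e y : Set (EucSp d)) ∈ corona T k P') :
    (e ⟨(x : Set (EucSp d)) ∩ (y : Set (EucSp d)), hxy⟩ : Set (EucSp d))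
      = (e x : Set (EucSp d)) ∩ (e y : Set (EucSp d)) := by
  apply le_antisymm
  · have h1 : (⟨(x : Set (EucSp d)) ∩ (y : Set (EucSp d)), hxy⟩ : ↥(corona T k P)) ≤ x :=
      Set.inter_subset_left
    have h2 : (⟨(x : Set (EucSp d)) ∩ (y : Set (EucSp d)), hxy⟩ : ↥(corona T k P)) ≤ y :=
      Set.inter_subset_right
    exact Set.subset_inter (e.monotone h1) (e.monotone h2)
  · have h3 : (⟨(e x : Set (EucSp d)) ∩ (e y : Set (EucSp d)), hexy⟩ : ↥(corona T k P')) ≤ e x :=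
      Set.inter_subset_left
    have h4 : (⟨(e x : Set (EucSp d)) ∩ (e y : Set (EucSp d)), hexy⟩ : ↥(corona T k P')) ≤ e y :=
      Set.inter_subset_right
    have h5 : e.symm ⟨(e x : Set (EucSp d)) ∩ (e y : Set (EucSp d)), hexy⟩ ≤ x := by
      have := e.symm.monotone h3
      rwa [e.symm_apply_apply] at this
    have h6 : e.symm ⟨(e x : Set (EucSp d)) ∩ (e y : Set (EucSp d)), hexy⟩ ≤ y := by
      have := e.symm.monotone h4
      rwa [e.symm_apply_apply] at this
    have h7 : e.symm ⟨(e x : Set (EucSp d)) ∩ (e y : Set (EucSp d)), hexy⟩ ≤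
        ⟨(x : Set (EucSp d)) ∩ (y : Set (EucSp d)), hxy⟩ :=
      Set.subset_inter h5 h6
    have h8 := e.monotone h7
    rwa [e.apply_symm_apply] at h8

/-- Key transfer lemma: a centered isomorphism of `k`-th coronas maps members of the
`(k-1)`-st corona to members of the `(k-1)`-st corona. -/
lemma transfer_mem (T : Tiling d) {k : ℕ} (hk : 1 ≤ k)
    (hP : P ∈ T.tiles) (hP' : P' ∈ T.tiles)
    (e : ↥(corona T k P) ≃o ↥(corona T k P')) (he : IsCenteredIso T k P P' e)
    {F : Set (EucSp d)} (hFk : F ∈ corona T k P) (hFk1 : F ∈ corona T (k - 1) P) :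
    (e ⟨F, hFk⟩ : Set (EucSp d)) ∈ corona T (k - 1) P' := by
  obtain ⟨Q, hQt, hQdist, hQface⟩ := hFk1
  obtain ⟨m, hmk, f, hf0, hfm, hftiles, hfdim⟩ := tileDist_le_iff.mp hQdist
  have hmemc : ∀ j, j ≤ m → f j ∈ corona T k P := by
    intro j hj
    refine ⟨f j, hftiles j hj, ?_, IsExposed.refl _⟩
    have hchainj : TileChain T P (f j) j :=
      ⟨f, hf0, rfl, fun i hi => hftiles i (le_trans hi hj),
        fun i h1 h2 => hfdim i h1 (le_trans h2 hj)⟩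
    exact tileDist_le_iff.mpr ⟨j, by omega, hchainj⟩
  set g : ℕ → Set (EucSp d) :=
    fun j => (e ⟨f (min j m), hmemc _ (min_le_right _ _)⟩ : Set (EucSp d)) with hg
  have hgtile : ∀ j, g j ∈ T.tiles := by
    intro j
    exact isMax_tile (orderIso_isMax e (tile_isMax (hftiles _ (min_le_right _ _))))
  have hgdist : ∀ j, tileDist T P' (g j) ≤ (k : ℕ∞) := fun j =>
    tile_dist_of_mem_corona (e ⟨f (min j m), hmemc _ (min_le_right _ _)⟩).2 (hgtile j)
  have hgdim : ∀ j, 1 ≤ j → j ≤ m → (d : ℤ) - 2 ≤ fdimZ (g (j - 1) ∩ g j) := by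
    intro j h1 h2
    have hj1 : min (j - 1) m = j - 1 := min_eq_left (by omega)
    have hjj : min j m = j := min_eq_left h2
    set x : ↥(corona T k P) := ⟨f (min (j - 1) m), hmemc _ (min_le_right _ _)⟩ with hxdef
    set y : ↥(corona T k P) := ⟨f (min j m), hmemc _ (min_le_right _ _)⟩ with hydef
    have hxt : (x : Set (EucSp d)) ∈ T.tiles := hftiles _ (min_le_right _ _)
    have hyt : (y : Set (EucSp d)) ∈ T.tiles := hftiles _ (min_le_right _ _)
    have hxd : tileDist T P (x : Set (EucSp d)) ≤ (k : ℕ∞) := tile_dist_of_mem_corona x.2 hxt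
    have hyd : tileDist T P (y : Set (EucSp d)) ≤ (k : ℕ∞) := tile_dist_of_mem_corona y.2 hyt
    have hdimxy : (d : ℤ) - 2 ≤ fdimZ ((x : Set (EucSp d)) ∩ (y : Set (EucSp d))) := by
      rw [hxdef, hydef]
      simp only [hj1, hjj]
      exact hfdim j h1 h2
    have hnch := (dim_inter_ge_iff_no_chain hxt hyt hxd hyd).mp hdimxy
    have hxyc : (x : Set (EucSp d)) ∩ (y : Set (EucSp d)) ∈ corona T k P :=
      inter_mem_corona hxt hyt hyd
    have hext : (e x : Set (EucSp d)) ∈ T.tiles := isMax_tile (orderIso_isMax e (tile_isMax hxt))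
    have heyt : (e y : Set (EucSp d)) ∈ T.tiles := isMax_tile (orderIso_isMax e (tile_isMax hyt))
    have heyd : tileDist T P' (e y : Set (EucSp d)) ≤ (k : ℕ∞) :=
      tile_dist_of_mem_corona (e y).2 heyt
    have hexd : tileDist T P' (e x : Set (EucSp d)) ≤ (k : ℕ∞) :=
      tile_dist_of_mem_corona (e x).2 hext
    have hexyc : (e x : Set (EucSp d)) ∩ (e y : Set (EucSp d)) ∈ corona T k P' :=
      inter_mem_corona hext heyt heyd
    have hmap := orderIso_map_inter e hxyc hexyc
    have hgj1 : g (j - 1) = (e x : Set (EucSp d)) := rfl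
    have hgj : g j = (e y : Set (EucSp d)) := rfl
    rw [hgj1, hgj]
    rw [dim_inter_ge_iff_no_chain hext heyt hexd heyd]
    rintro ⟨G₁, hG₁, G₂, hG₂, hc1, hc2, hc3⟩
    apply hnch
    have hmapsub : e ⟨(x : Set (EucSp d)) ∩ (y : Set (EucSp d)), hxyc⟩ =
        ⟨(e x : Set (EucSp d)) ∩ (e y : Set (EucSp d)), hexyc⟩ := Subtype.ext hmap
    have hsymmmap : e.symm ⟨(e x : Set (EucSp d)) ∩ (e y : Set (EucSp d)), hexyc⟩ =
        ⟨(x : Set (EucSp d)) ∩ (y : Set (EucSp d)), hxyc⟩ := by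
      rw [← hmapsub, e.symm_apply_apply]
    refine ⟨(e.symm ⟨G₁, hG₁⟩ : Set (EucSp d)), (e.symm ⟨G₁, hG₁⟩).2,
      (e.symm ⟨G₂, hG₂⟩ : Set (EucSp d)), (e.symm ⟨G₂, hG₂⟩).2, ?_, ?_, ?_⟩
    · have hlt : (⟨(e x : Set (EucSp d)) ∩ (e y : Set (EucSp d)), hexyc⟩ : ↥(corona T k P'))
          < ⟨G₁, hG₁⟩ := Subtype.mk_lt_mk.mpr hc1
      have := e.symm.strictMono hlt
      rw [hsymmmap] at this
      exact this
    · exact e.symm.strictMono (Subtype.mk_lt_mk.mpr hc2)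
    · have hlt : (⟨G₂, hG₂⟩ : ↥(corona T k P')) < e x := by
        rw [← Subtype.coe_lt_coe]
        exact hc3
      have := e.symm.strictMono hlt
      rw [e.symm_apply_apply] at this
      rw [← Subtype.coe_lt_coe] at this
      exact this
  have hg0 : g 0 = P' := by
    have hminz : min 0 m = 0 := by omega
    have hxeq : (⟨f (min 0 m), hmemc _ (min_le_right _ _)⟩ : ↥(corona T k P)) =
        ⟨P, self_mem_corona hP k⟩ := by
      apply Subtype.ext
      simp only [hminz, hf0]
    show (e ⟨f (min 0 m), hmemc _ (min_le_right _ _)⟩ : Set (EucSp d)) = P'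
    rw [hxeq, he (self_mem_corona hP k) (self_mem_corona hP' k)]
  have hchain' : TileChain T P' (g m) m :=
    ⟨g, hg0, rfl, fun j _ => hgtile j, hgdim⟩
  have hgmdist : tileDist T P' (g m) ≤ ((k - 1 : ℕ) : ℕ∞) :=
    tileDist_le_iff.mpr ⟨m, hmk, hchain'⟩
  have hFsub : F ⊆ f m := by
    rw [hfm]
    exact hQface.subset
  have hle : (⟨F, hFk⟩ : ↥(corona T k P)) ≤ ⟨f (min m m), hmemc _ (min_le_right _ _)⟩ := by
    show F ⊆ f (min m m)
    rw [min_self]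
    exact hFsub
  have hsub : (e ⟨F, hFk⟩ : Set (EucSp d)) ⊆ g m := e.monotone hle
  exact ⟨g m, hgtile m, hgmdist,
    isFaceOf_tile_of_subset (e ⟨F, hFk⟩).2 (hgtile m) hsub⟩

/-- Isomorphic centered `k`-th coronas have isomorphic centered `(k-1)`-st coronas. -/
lemma corona_refine (T : Tiling d) {k : ℕ} (hk : 1 ≤ k)
    (hP : P ∈ T.tiles) (hP' : P' ∈ T.tiles)
    (h : CoronasIsomorphic T k P P') : CoronasIsomorphic T (k - 1) P P' := by
  obtain ⟨e, he⟩ := h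
  have hesymm : IsCenteredIso T k P' P e.symm := by
    intro hP'm hPm
    have h1 := he hPm hP'm
    rw [← h1, e.symm_apply_apply]
  have hsub : corona T (k - 1) P ⊆ corona T k P := corona_mono (by omega) P
  have hsub' : corona T (k - 1) P' ⊆ corona T k P' := corona_mono (by omega) P'
  let φ : ↥(corona T (k - 1) P) → ↥(corona T (k - 1) P') := fun F =>
    ⟨(e ⟨F.1, hsub F.2⟩ : Set (EucSp d)), transfer_mem T hk hP hP' e he (hsub F.2) F.2⟩
  let ψ : ↥(corona T (k - 1) P') → ↥(corona T (k - 1) P) := fun G =>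
    ⟨(e.symm ⟨G.1, hsub' G.2⟩ : Set (EucSp d)),
      transfer_mem T hk hP' hP e.symm hesymm (hsub' G.2) G.2⟩
  have hψφ : Function.LeftInverse ψ φ := by
    intro F
    apply Subtype.ext
    show (e.symm ⟨(e ⟨F.1, hsub F.2⟩ : Set (EucSp d)), _⟩ : Set (EucSp d)) = F.1
    have heq : (⟨(e ⟨F.1, hsub F.2⟩ : Set (EucSp d)), hsub' (φ F).2⟩ : ↥(corona T k P')) =
        e ⟨F.1, hsub F.2⟩ := Subtype.ext rfl
    rw [heq, e.symm_apply_apply]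
  have hφψ : Function.RightInverse ψ φ := by
    intro G
    apply Subtype.ext
    show (e ⟨(e.symm ⟨G.1, hsub' G.2⟩ : Set (EucSp d)), _⟩ : Set (EucSp d)) = G.1
    have heq : (⟨(e.symm ⟨G.1, hsub' G.2⟩ : Set (EucSp d)), hsub (ψ G).2⟩ : ↥(corona T k P)) =
        e.symm ⟨G.1, hsub' G.2⟩ := Subtype.ext rfl
    rw [heq, e.apply_symm_apply]
  refine ⟨{ toEquiv := ⟨φ, ψ, hψφ, hφψ⟩, map_rel_iff' := ?_ }, ?_⟩
  · intro a b
    constructor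
    · intro hab
      have h1 : e ⟨a.1, hsub a.2⟩ ≤ e ⟨b.1, hsub b.2⟩ := hab
      have h2 := e.le_iff_le.mp h1
      exact h2
    · intro hab
      have h1 : (⟨a.1, hsub a.2⟩ : ↥(corona T k P)) ≤ ⟨b.1, hsub b.2⟩ := hab
      exact e.monotone h1
  · intro hPm hP'm
    apply Subtype.ext
    show (e ⟨P, hsub hPm⟩ : Set (EucSp d)) = P'
    rw [he (hsub hPm) (hsub' hP'm)]

end Transfer

section EquivalenceLemmas

variable {d : ℕ}

lemma coronasIso_refl (T : Tiling d) (k : ℕ) (P : Set (EucSp d)) :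
    CoronasIsomorphic T k P P :=
  ⟨OrderIso.refl _, fun _ _ => Subtype.ext rfl⟩

lemma coronasIso_symm {T : Tiling d} {k : ℕ} {P Q : Set (EucSp d)}
    (h : CoronasIsomorphic T k P Q) : CoronasIsomorphic T k Q P := by
  obtain ⟨e, he⟩ := h
  refine ⟨e.symm, fun hQ hP => ?_⟩
  rw [← he hP hQ, e.symm_apply_apply]

lemma coronasIso_trans {T : Tiling d} {k : ℕ} {P Q R : Set (EucSp d)}
    (h1 : CoronasIsomorphic T k P Q) (h2 : CoronasIsomorphic T k Q R)
    (hQ : Q ∈ T.tiles) : CoronasIsomorphic T k P R := by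
  obtain ⟨e, he⟩ := h1
  obtain ⟨f, hf⟩ := h2
  refine ⟨e.trans f, fun hP hR => ?_⟩
  have : (e.trans f) ⟨P, hP⟩ = f (e ⟨P, hP⟩) := rfl
  rw [this, he hP (self_mem_corona hQ k), hf (self_mem_corona hQ k) hR]

end EquivalenceLemmas

/-- If `N_{k-1}(T) = N_k(T) < ∞` for a positive integer `k`, then the centered `k`-th coronas
of two tiles are isomorphic if and only if their centered `(k-1)`-st coronas are isomorphic. -/
theorem coronasIsomorphic_iff_of_count_eq (d : ℕ) (T : Tiling d) (k : ℕ) (hk : 1 ≤ k)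
    (hfin : Ncount T k < Cardinal.aleph0) (heq : Ncount T (k - 1) = Ncount T k) :
    ∀ P ∈ T.tiles, ∀ P' ∈ T.tiles,
      (CoronasIsomorphic T k P P' ↔ CoronasIsomorphic T (k - 1) P P') := by
  intro P hP P' hP'
  constructor
  · exact fun h => corona_refine T hk hP hP' h
  · intro h1
    set Sk : ↥T.tiles → ↥T.tiles → Prop :=
      fun a b => CoronasIsomorphic T k (a : Set (EucSp d)) (b : Set (EucSp d)) with hSk
    set Sk1 : ↥T.tiles → ↥T.tiles → Prop :=
      fun a b => CoronasIsomorphic T (k - 1) (a : Set (EucSp d)) (b : Set (EucSp d)) with hSk1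
    have hequiv : Equivalence Sk :=
      ⟨fun a => coronasIso_refl T k a, fun h => coronasIso_symm h,
        fun {a b c} hab hbc => coronasIso_trans hab hbc b.2⟩
    have hSR : ∀ a b : ↥T.tiles, Sk a b → Sk1 a b := fun a b hab =>
      corona_refine T hk a.2 b.2 hab
    let φ : Quot Sk → Quot Sk1 :=
      Quot.lift (fun a => Quot.mk Sk1 a) (fun a b hab => Quot.sound (hSR a b hab))
    have hsurj : Function.Surjective φ := by
      intro q
      induction q using Quot.ind with
      | _ a => exact ⟨Quot.mk Sk a, rfl⟩
    have hfin1 : Finite (Quot Sk) := Cardinal.mk_lt_aleph0_iff.mp hfin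
    have heq' : Cardinal.mk (Quot Sk1) = Cardinal.mk (Quot Sk) := heq
    obtain ⟨ψ⟩ : Nonempty (Quot Sk1 ≃ Quot Sk) := Cardinal.eq.mp heq'
    have hinjcomp : Function.Injective (ψ ∘ φ) :=
      Finite.injective_iff_surjective.mpr (ψ.surjective.comp hsurj)
    have hinj : Function.Injective φ := fun a b hab => hinjcomp (congrArg ψ hab)
    have hq : Quot.mk Sk1 (⟨P, hP⟩ : ↥T.tiles) = Quot.mk Sk1 ⟨P', hP'⟩ :=
      Quot.sound h1
    have hq2 : φ (Quot.mk Sk ⟨P, hP⟩) = φ (Quot.mk Sk ⟨P', hP'⟩) := hq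
    have hq3 : Quot.mk Sk (⟨P, hP⟩ : ↥T.tiles) = Quot.mk Sk ⟨P', hP'⟩ := hinj hq2
    have hgen := Quot.eqvGen_exact hq3
    exact hequiv.eqvGen_iff.mp hgen

end
end

section
/- Let T be a locally finite face-to-face tiling of Euclidean d-space ℝ^d by convex d-polytopes. Then any two tiles P and Q of T can be joined by a finite sequence P = P_0, P_1, …, P_n = Q of tiles of T such that P_{j−1} ∩ P_j is a (d−1)-dimensional face of both P_{j−1} and P_j for j = 1,…,n. In particular, the distance d(P,Q) is finite for any two tiles P, Q of T. -/
noncomputable section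
open scoped Classical

variable {d : ℕ}

/-! ### Auxiliary machinery for the proof -/

namespace FacetChainAux

variable {d : ℕ}

lemma tile_closed (T : Tiling d) {P : Set (EucSp d)} (hP : P ∈ T.tiles) : IsClosed P := by
  obtain ⟨⟨s, rfl⟩, -⟩ := T.polytope P hP
  exact (s.finite_toSet.isCompact_convexHull ℝ).isClosed

lemma tile_int_nonempty (T : Tiling d) {P : Set (EucSp d)} (hP : P ∈ T.tiles) :
    (interior P).Nonempty := (T.polytope P hP).2

/-- A nonempty proper exposed face of a set lies in a hyperplane, so has dimension `≤ d-1`. -/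
lemma fdimZ_le_of_proper {R F : Set (EucSp d)} (hexp : IsExposed ℝ R F)
    (hne : F.Nonempty) (hFR : F ≠ R) : fdimZ F ≤ (d : ℤ) - 1 := by
  obtain ⟨l, hl⟩ := hexp hne
  have hFsub : F ⊆ R := by rw [hl]; exact Set.sep_subset _ _
  have hl0 : ∃ u : EucSp d, l u ≠ 0 := by
    by_contra h
    push_neg at h
    apply hFR
    rw [hl]
    ext x
    simp [h]
  obtain ⟨u, hu⟩ := hl0
  have hker : (affineSpan ℝ F).direction ≤ LinearMap.ker (l : EucSp d →ₗ[ℝ] ℝ) := by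
    rw [direction_affineSpan, vectorSpan_def]
    refine Submodule.span_le.2 ?_
    rintro v ⟨p, hp, q, hq, rfl⟩
    have hp' : p ∈ R ∧ ∀ y ∈ R, l y ≤ l p := by rw [hl] at hp; exact hp
    have hq' : q ∈ R ∧ ∀ y ∈ R, l y ≤ l q := by rw [hl] at hq; exact hq
    have h1 : l p ≤ l q := hq'.2 p hp'.1
    have h2 : l q ≤ l p := hp'.2 q hq'.1
    have : l (p - q) = 0 := by rw [map_sub]; linarith
    simpa [LinearMap.mem_ker, vsub_eq_sub] using this
  have hrange : LinearMap.range (l : EucSp d →ₗ[ℝ] ℝ) ≠ ⊥ := by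
    intro h
    apply hu
    have hm : (l : EucSp d →ₗ[ℝ] ℝ) u ∈ LinearMap.range (l : EucSp d →ₗ[ℝ] ℝ) :=
      LinearMap.mem_range_self _ u
    rw [h] at hm
    simpa using hm
  have hrk := LinearMap.finrank_range_add_finrank_ker (l : EucSp d →ₗ[ℝ] ℝ)
  rw [finrank_euclideanSpace_fin] at hrk
  have hrpos : 0 < Module.finrank ℝ (LinearMap.range (l : EucSp d →ₗ[ℝ] ℝ)) := by
    rcases Nat.eq_zero_or_pos (Module.finrank ℝ (LinearMap.range (l : EucSp d →ₗ[ℝ] ℝ))) with h | h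
    · exact absurd (Submodule.finrank_eq_zero.1 h) hrange
    · exact h
  have hmono : Module.finrank ℝ (affineSpan ℝ F).direction ≤
      Module.finrank ℝ (LinearMap.ker (l : EucSp d →ₗ[ℝ] ℝ)) := Submodule.finrank_mono hker
  rw [fdimZ, if_neg (Set.nonempty_iff_ne_empty.1 hne)]
  omega

/-- The only tile containing an interior point of a tile `R` is `R` itself. -/
lemma eq_of_mem_interior (T : Tiling d) {R R' : Set (EucSp d)} (hR : R ∈ T.tiles)
    (hR' : R' ∈ T.tiles) {x : EucSp d} (hx : x ∈ interior R) (hx' : x ∈ R') : R = R' := by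
  by_contra hne
  have hexp := (T.faceToFace R hR R' hR').1
  have hxF : x ∈ R ∩ R' := ⟨interior_subset hx, hx'⟩
  obtain ⟨l, hl⟩ := hexp ⟨x, hxF⟩
  have hmax : ∀ y ∈ R, l y ≤ l x := by
    have := hl ▸ hxF
    exact this.2
  obtain ⟨ε, hε, hball⟩ := Metric.mem_nhds_iff.1 (mem_interior_iff_mem_nhds.1 hx)
  have hle : ∀ v : EucSp d, l v ≤ 0 := by
    intro v
    by_cases hv : v = (0 : EucSp d)
    · simp [hv]
    have hvn : (0:ℝ) < ‖v‖ := norm_pos_iff.2 hv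
    set cc : ℝ := ε / (2 * ‖v‖) with hcc
    have hc : 0 < cc := by positivity
    have hy : x + cc • v ∈ R := by
      apply hball
      have hde : dist (x + cc • v) x = cc * ‖v‖ := by
        rw [dist_eq_norm, add_sub_cancel_left, norm_smul, Real.norm_of_nonneg hc.le]
      have hlt : cc * ‖v‖ < ε := by
        rw [hcc, div_mul_eq_mul_div, mul_comm ε ‖v‖, mul_comm (2:ℝ) ‖v‖,
          mul_div_mul_left _ _ hvn.ne']
        linarith
      rw [Metric.mem_ball, hde]
      exact hlt
    have := hmax _ hy
    rw [map_add, map_smul, smul_eq_mul] at this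
    nlinarith
  have hlz : ∀ v : EucSp d, l v = 0 := by
    intro v
    have h1 := hle v
    have h2 := hle (-v)
    rw [map_neg] at h2
    linarith
  have hRR' : R ⊆ R' := by
    intro y hy
    have : y ∈ R ∩ R' := by
      rw [hl]
      exact ⟨hy, fun z _ => by rw [hlz, hlz]⟩
    exact this.2
  have hdisj := T.disjointInteriors R hR R' hR' hne
  have : x ∈ interior R ∩ interior R' := ⟨hx, interior_mono hRR' hx⟩
  rw [hdisj] at this
  exact this

/-- The "bad pieces": intersections of pairs of distinct tiles of dimension `≤ d-2`. -/
def badPieces (T : Tiling d) : Set (Set (EucSp d)) :=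
  {A | ∃ P' ∈ T.tiles, ∃ Q' ∈ T.tiles, P' ≠ Q' ∧ A = P' ∩ Q' ∧ fdimZ A ≤ (d : ℤ) - 2}

/-- The union of the bad pieces: the `(d-2)`-skeleton of the tiling. -/
def Sset (T : Tiling d) : Set (EucSp d) := ⋃₀ badPieces T

lemma badPieces_countable (T : Tiling d) : (badPieces T).Countable := by
  apply Set.Countable.mono ?_ (Set.Countable.image2 T.countable T.countable (· ∩ ·))
  rintro A ⟨P', hP', Q', hQ', -, rfl, -⟩
  exact Set.mem_image2_of_mem hP' hQ'

lemma notin_S_of_interior (T : Tiling d) {R : Set (EucSp d)} (hR : R ∈ T.tiles)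
    {x : EucSp d} (hx : x ∈ interior R) : x ∉ Sset T := by
  rintro ⟨A, ⟨P', hP', Q', hQ', hne, rfl, -⟩, hxP, hxQ⟩
  exact hne ((eq_of_mem_interior T hR hP' hx hxP).symm.trans (eq_of_mem_interior T hR hQ' hx hxQ))

lemma not_subset_tile (T : Tiling d) {R R' : Set (EucSp d)} (hR : R ∈ T.tiles)
    (hR' : R' ∈ T.tiles) (hne : R ≠ R') : ¬ R ⊆ R' := by
  intro hsub
  obtain ⟨x, hx⟩ := tile_int_nonempty T hR
  have hdisj := T.disjointInteriors R hR R' hR' hne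
  have : x ∈ interior R ∩ interior R' := ⟨hx, interior_mono hsub hx⟩
  rw [hdisj] at this
  exact this

/-- Two distinct tiles sharing a point off the skeleton meet in a common `(d-1)`-face. -/
lemma step_strong (T : Tiling d) {R R' x} (hR : R ∈ T.tiles) (hR' : R' ∈ T.tiles)
    (hne : R ≠ R') (hx : x ∈ R ∩ R') (hxS : x ∉ Sset T) :
    IsFaceOf (R ∩ R') R ∧ IsFaceOf (R ∩ R') R' ∧ fdimZ (R ∩ R') = (d : ℤ) - 1 := by
  obtain ⟨hf1, hf2⟩ := T.faceToFace R hR R' hR'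
  refine ⟨hf1, hf2, ?_⟩
  have hproper : R ∩ R' ≠ R := by
    intro h
    exact not_subset_tile T hR hR' hne (by rw [← h]; exact Set.inter_subset_right)
  have hupper := fdimZ_le_of_proper hf1 ⟨x, hx⟩ hproper
  have hlower : ¬ fdimZ (R ∩ R') ≤ (d : ℤ) - 2 := by
    intro h
    exact hxS ⟨R ∩ R', ⟨R, hR, R', hR', hne, rfl, h⟩, hx⟩
  omega

/-- A proper affine subspace has empty interior. -/
lemma interior_affine_empty (s : AffineSubspace ℝ (EucSp d))
    (hs : Module.finrank ℝ s.direction < d) : interior (s : Set (EucSp d)) = ∅ := by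
  by_contra h
  obtain ⟨x, hx⟩ := Set.nonempty_iff_ne_empty.2 h
  have hxs : x ∈ s := interior_subset hx
  have htop : s.direction = ⊤ := by
    rw [Submodule.eq_top_iff']
    intro v
    by_cases hv : v = (0 : EucSp d)
    · simp [hv]
    have hvn : (0:ℝ) < ‖v‖ := norm_pos_iff.2 hv
    obtain ⟨ε, hε, hball⟩ := Metric.mem_nhds_iff.1 (mem_interior_iff_mem_nhds.1 hx)
    set cc : ℝ := ε / (2 * ‖v‖) with hcc
    have hc : 0 < cc := by positivity
    have hy : x + cc • v ∈ s := by
      apply hball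
      have hde : dist (x + cc • v) x = cc * ‖v‖ := by
        rw [dist_eq_norm, add_sub_cancel_left, norm_smul, Real.norm_of_nonneg hc.le]
      have hlt : cc * ‖v‖ < ε := by
        rw [hcc, div_mul_eq_mul_div, mul_comm ε ‖v‖, mul_comm (2:ℝ) ‖v‖,
          mul_div_mul_left _ _ hvn.ne']
        linarith
      rw [Metric.mem_ball, hde]
      exact hlt
    have hmem : (x + cc • v) -ᵥ x ∈ s.direction := AffineSubspace.vsub_mem_direction hy hxs
    rw [vsub_eq_sub, add_sub_cancel_left] at hmem
    have := s.direction.smul_mem cc⁻¹ hmem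
    rwa [smul_smul, inv_mul_cancel₀ hc.ne', one_smul] at this
  rw [htop, finrank_top, finrank_euclideanSpace_fin] at hs
  omega

/-- The affine span of a point together with a `(≤ d-2)`-dimensional set is proper. -/
lemma span_insert_finrank (a : EucSp d) (A : Set (EucSp d)) (hA : fdimZ A ≤ (d : ℤ) - 2)
    (hd : 1 ≤ d) : Module.finrank ℝ (affineSpan ℝ (insert a A)).direction < d := by
  rcases A.eq_empty_or_nonempty with rfl | ⟨p, hp⟩
  · have he : insert a (∅ : Set (EucSp d)) = {a} := by simp
    rw [he, direction_affineSpan, vectorSpan_singleton]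
    simpa using (show 0 < d by omega)
  · have hp' : p ∈ affineSpan ℝ A := subset_affineSpan ℝ A hp
    have key : (affineSpan ℝ (insert a A)).direction
        = Submodule.span ℝ {a -ᵥ p} ⊔ (affineSpan ℝ A).direction := by
      rw [← affineSpan_insert_affineSpan, AffineSubspace.direction_affineSpan_insert hp']
    have h1 : Module.finrank ℝ (Submodule.span ℝ ({a -ᵥ p} : Set (EucSp d))) ≤ 1 := by
      by_cases hz : a -ᵥ p = (0 : EucSp d)
      · have hz' : ({a -ᵥ p} : Set (EucSp d)) = {0} := by rw [hz]
        rw [hz', Submodule.span_zero_singleton]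
        simp
      · rw [finrank_span_singleton hz]
    have h2 : (Module.finrank ℝ (affineSpan ℝ A).direction : ℤ) ≤ (d : ℤ) - 2 := by
      rwa [fdimZ, if_neg (Set.nonempty_iff_ne_empty.1 ⟨p, hp⟩)] at hA
    have h3 := Submodule.finrank_sup_add_finrank_inf_eq (Submodule.span ℝ ({a -ᵥ p} : Set (EucSp d)))
      (affineSpan ℝ A).direction
    rw [key]
    omega

/-- Baire-category choice of a point avoiding countably many proper affine subspaces. -/
lemma exists_avoid (s : Set (AffineSubspace ℝ (EucSp d))) (hc : s.Countable)
    (hdim : ∀ A ∈ s, Module.finrank ℝ A.direction < d) :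
    ∃ c : EucSp d, ∀ A ∈ s, c ∉ A := by
  have hdense : Dense (⋂₀ ((fun A : AffineSubspace ℝ (EucSp d) =>
      ((A : Set (EucSp d))ᶜ)) '' s)) := by
    apply dense_sInter_of_isOpen
    · rintro t ⟨A, hA, rfl⟩
      exact A.closed_of_finiteDimensional.isOpen_compl
    · exact hc.image _
    · rintro t ⟨A, hA, rfl⟩
      exact interior_eq_empty_iff_dense_compl.1 (interior_affine_empty A (hdim A hA))
  obtain ⟨c, hc'⟩ := hdense.nonempty
  exact ⟨c, fun A hA => Set.mem_sInter.1 hc' _ ⟨A, hA, rfl⟩⟩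

/-- If `c` avoids the affine span of `{a} ∪ A` and `a ∉ A`, the segment `[a,c]` avoids `A`. -/
lemma segment_avoid {a c : EucSp d} {A : Set (EucSp d)} (ha : a ∉ A)
    (hc : c ∉ affineSpan ℝ (insert a A)) : ∀ x ∈ segment ℝ a c, x ∉ A := by
  intro x hx hxA
  rw [segment_eq_image'] at hx
  obtain ⟨t, ht, rfl⟩ := hx
  simp only [] at hxA ⊢
  rcases eq_or_lt_of_le ht.1 with h0 | h0
  · apply ha
    have : a + t • (c - a) = a := by rw [← h0]; simp
    rwa [this] at hxA
  · apply hc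
    have hxspan : a + t • (c - a) ∈ affineSpan ℝ (insert a A) :=
      subset_affineSpan ℝ _ (Set.mem_insert_iff.2 (Or.inr hxA))
    have haspan : a ∈ affineSpan ℝ (insert a A) :=
      subset_affineSpan ℝ _ (Set.mem_insert _ _)
    have hm := (affineSpan ℝ (insert a A)).smul_vsub_vadd_mem t⁻¹ hxspan haspan haspan
    have heq : t⁻¹ • ((a + t • (c - a)) -ᵥ a) +ᵥ a = c := by
      rw [vsub_eq_sub, add_sub_cancel_left, smul_smul, inv_mul_cancel₀ h0.ne', one_smul,
        vadd_eq_add, sub_add_cancel]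
    rwa [heq] at hm

/-- Finitely many tiles meet any compact set. -/
lemma finite_tiles_meeting (T : Tiling d) {K : Set (EucSp d)} (hK : IsCompact K) :
    {R | R ∈ T.tiles ∧ (R ∩ K).Nonempty}.Finite := by
  choose U hU hfin using T.locallyFinite
  obtain ⟨t, -, ht⟩ := hK.elim_nhds_subcover U (fun x _ => hU x)
  apply Set.Finite.subset (t.finite_toSet.biUnion fun x _ => hfin x)
  rintro R ⟨hR, y, hyR, hyK⟩
  obtain ⟨x, hxt, hyU⟩ := Set.mem_iUnion₂.1 (ht hyK)
  exact Set.mem_biUnion hxt ⟨hR, y, hyR, hyU⟩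

/-- Adjacency relation: both are tiles sharing a point off the skeleton. -/
def Good (T : Tiling d) (R R' : Set (EucSp d)) : Prop :=
  R ∈ T.tiles ∧ R' ∈ T.tiles ∧ ∃ x, x ∉ Sset T ∧ x ∈ R ∧ x ∈ R'

lemma good_symm (T : Tiling d) : Symmetric (Good T) := by
  rintro R R' ⟨h1, h2, x, hx, hxR, hxR'⟩
  exact ⟨h2, h1, x, hx, hxR', hxR⟩

/-- Walking along a segment avoiding the skeleton, we can reach a tile containing the
endpoint through a `Good`-chain. -/
lemma seg_reach (T : Tiling d) {a c : EucSp d} (hseg : ∀ x ∈ segment ℝ a c, x ∉ Sset T)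
    {R₀ : Set (EucSp d)} (hR₀ : R₀ ∈ T.tiles) (ha : a ∈ R₀) :
    ∃ R₁ ∈ T.tiles, c ∈ R₁ ∧ Relation.ReflTransGen (Good T) R₀ R₁ := by
  set γ : ℝ → EucSp d := fun t => a + t • (c - a) with hγdef
  have hγc : Continuous γ := continuous_const.add (continuous_id.smul continuous_const)
  have hKseg : segment ℝ a c = γ '' Set.Icc 0 1 := segment_eq_image' ℝ a c
  have hγmem : ∀ t ∈ Set.Icc (0:ℝ) 1, γ t ∈ segment ℝ a c := by
    intro t ht
    rw [hKseg]
    exact Set.mem_image_of_mem γ ht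
  have hK : IsCompact (segment ℝ a c) := by
    rw [hKseg]; exact isCompact_Icc.image hγc
  set TS : Set (Set (EucSp d)) := {R | R ∈ T.tiles ∧ (R ∩ segment ℝ a c).Nonempty} with hTS
  have hTSfin : TS.Finite := finite_tiles_meeting T hK
  set I : Set (EucSp d) → Set ℝ := fun R => {t | t ∈ Set.Icc (0:ℝ) 1 ∧ γ t ∈ R} with hI
  have hIclosed : ∀ R ∈ T.tiles, IsClosed (I R) := by
    intro R hR
    have : I R = Set.Icc (0:ℝ) 1 ∩ γ ⁻¹' R := rfl
    rw [this]
    exact isClosed_Icc.inter ((tile_closed T hR).preimage hγc)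
  set TSr : Set (Set (EucSp d)) := {R | R ∈ TS ∧ Relation.ReflTransGen (Good T) R₀ R} with hTSr
  set W : Set ℝ := ⋃ R ∈ TSr, I R with hW
  have hWclosed : IsClosed W :=
    Set.Finite.isClosed_biUnion (hTSfin.subset fun R hR => hR.1) fun R hR => hIclosed R hR.1.1
  have hWsub : W ⊆ Set.Icc 0 1 := by
    rintro t ht
    obtain ⟨R, -, ht'⟩ := Set.mem_iUnion₂.1 ht
    exact ht'.1
  have hγ0 : γ 0 = a := by simp [hγdef]
  have hγ1 : γ 1 = c := by simp [hγdef]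
  have hW0 : (0:ℝ) ∈ W := by
    apply Set.mem_biUnion (show R₀ ∈ TSr from ⟨⟨hR₀, a, ha, left_mem_segment ℝ a c⟩,
      Relation.ReflTransGen.refl⟩)
    exact ⟨⟨le_refl 0, zero_le_one⟩, by rw [hγ0]; exact ha⟩
  have hWne : W.Nonempty := ⟨0, hW0⟩
  have hWbdd : BddAbove W := BddAbove.mono hWsub bddAbove_Icc
  set u : ℝ := sSup W with hu
  have huW : u ∈ W := hWclosed.csSup_mem hWne hWbdd
  have huIcc : u ∈ Set.Icc (0:ℝ) 1 := hWsub huW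
  have hu1 : u = 1 := by
    by_contra hne1
    have hu1' : u < 1 := lt_of_le_of_ne huIcc.2 hne1
    have hcover : Set.Ioc u 1 ⊆ ⋃ R ∈ TS, (I R ∩ Set.Ioc u 1) := by
      intro t ht
      have htIcc : t ∈ Set.Icc (0:ℝ) 1 := ⟨le_trans huIcc.1 ht.1.le, ht.2⟩
      have : γ t ∈ ⋃₀ T.tiles := by rw [T.covers]; exact Set.mem_univ _
      obtain ⟨R, hR, hγt⟩ := this
      exact Set.mem_biUnion (show R ∈ TS from ⟨hR, γ t, hγt, hγmem t htIcc⟩)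
        ⟨⟨htIcc, hγt⟩, ht⟩
    have hucl : u ∈ closure (Set.Ioc u 1) := by
      rw [closure_Ioc hu1'.ne]
      exact ⟨le_refl u, hu1'.le⟩
    have : u ∈ ⋃ R ∈ TS, closure (I R ∩ Set.Ioc u 1) := by
      rw [← Set.Finite.closure_biUnion hTSfin]
      exact closure_mono hcover hucl
    obtain ⟨Rs, hRs, hucl'⟩ := Set.mem_iUnion₂.1 this
    have huIRs : u ∈ I Rs := by
      have := closure_mono (Set.inter_subset_left (t := Set.Ioc u 1)) hucl'
      rwa [(hIclosed Rs hRs.1).closure_eq] at this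
    have hnonempty : (I Rs ∩ Set.Ioc u 1).Nonempty := by
      by_contra h
      rw [Set.not_nonempty_iff_eq_empty.1 h, closure_empty] at hucl'
      exact hucl'
    obtain ⟨t', ht'I, ht'Ioc⟩ := hnonempty
    obtain ⟨R', hR', huIR'⟩ := Set.mem_iUnion₂.1 huW
    have hgood : Good T R' Rs :=
      ⟨hR'.1.1, hRs.1, γ u, hseg _ (hγmem u huIcc), huIR'.2, huIRs.2⟩
    have hRsTSr : Rs ∈ TSr := ⟨hRs, hR'.2.tail hgood⟩
    have : t' ∈ W := Set.mem_biUnion hRsTSr ht'I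
    exact absurd (le_csSup hWbdd this) (not_le.2 ht'Ioc.1)
  obtain ⟨R₁, hR₁, huIR₁⟩ := Set.mem_iUnion₂.1 huW
  rw [hu1] at huIR₁
  exact ⟨R₁, hR₁.1.1, by rw [← hγ1]; exact huIR₁.2, hR₁.2⟩

/-- Converting a `Good`-chain into a facet chain. -/
lemma chain_of_rtg (T : Tiling d) {P Q : Set (EucSp d)} (hP : P ∈ T.tiles)
    (h : Relation.ReflTransGen (Good T) P Q) :
    ∃ (n : ℕ) (f : ℕ → Set (EucSp d)), f 0 = P ∧ f n = Q ∧ (∀ j ≤ n, f j ∈ T.tiles) ∧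
      ∀ j, 1 ≤ j → j ≤ n →
        IsFaceOf (f (j - 1) ∩ f j) (f (j - 1)) ∧ IsFaceOf (f (j - 1) ∩ f j) (f j) ∧
        fdimZ (f (j - 1) ∩ f j) = (d : ℤ) - 1 := by
  induction h with
  | refl =>
    exact ⟨0, fun _ => P, rfl, rfl, fun j _ => hP, fun j h1 h0 => absurd (h1.trans h0) (Nat.not_succ_le_zero 0)⟩
  | @tail R R' hPR hgood ih =>
    obtain ⟨n, f, hf0, hfn, hmem, hstep⟩ := ih
    by_cases heq : R = R'
    · exact ⟨n, f, hf0, heq ▸ hfn, hmem, hstep⟩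
    · obtain ⟨hRt, hR't, x, hxS, hxR, hxR'⟩ := hgood
      refine ⟨n + 1, fun j => if j ≤ n then f j else R', ?_, ?_, ?_, ?_⟩
      · simp [Nat.zero_le n, hf0]
      · simp
      · intro j hj
        by_cases hjn : j ≤ n
        · simpa [hjn] using hmem j hjn
        · simpa [hjn] using hR't
      · intro j h1 hjn1
        by_cases hjn : j ≤ n
        · have hj1 : j - 1 ≤ n := le_trans (Nat.sub_le j 1) hjn
          simpa [hjn, hj1] using hstep j h1 hjn
        · have hj : j = n + 1 := by omega
          subst hj
          have h1 : n + 1 - 1 = n := by omega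
          have hs := step_strong T hRt hR't heq ⟨hxR, hxR'⟩ hxS
          simpa [h1, hfn] using hs

end FacetChainAux

open FacetChainAux

lemma tileDist_ne_top_of_chain {d : ℕ} (T : Tiling d) {P Q : Set (EucSp d)} {n : ℕ}
    (h : TileChain T P Q n) : tileDist T P Q ≠ ⊤ := by
  intro htop
  have hle : tileDist T P Q ≤ (n : ℕ∞) := by
    unfold tileDist
    exact sInf_le ⟨n, rfl, h⟩
  rw [htop, top_le_iff] at hle
  simp at hle

/-- Any two tiles of `T` can be joined by a finite sequence of tiles in which any two
consecutive tiles meet in a common `(d-1)`-dimensional face; in particular the distance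
between any two tiles is finite. -/
theorem exists_facet_chain (d : ℕ) (T : Tiling d) (P Q : Set (EucSp d))
    (hP : P ∈ T.tiles) (hQ : Q ∈ T.tiles) :
    (∃ (n : ℕ) (f : ℕ → Set (EucSp d)), f 0 = P ∧ f n = Q ∧ (∀ j ≤ n, f j ∈ T.tiles) ∧
      ∀ j, 1 ≤ j → j ≤ n →
        IsFaceOf (f (j - 1) ∩ f j) (f (j - 1)) ∧ IsFaceOf (f (j - 1) ∩ f j) (f j) ∧
        fdimZ (f (j - 1) ∩ f j) = (d : ℤ) - 1) ∧
    tileDist T P Q ≠ ⊤ := by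
  by_cases hPQ : P = Q
  · subst hPQ
    refine ⟨⟨0, fun _ => P, rfl, rfl, fun j _ => hP, fun j h1 h0 => absurd (h1.trans h0) (Nat.not_succ_le_zero 0)⟩, ?_⟩
    exact tileDist_ne_top_of_chain T
      ⟨fun _ => P, rfl, rfl, fun j _ => hP, fun j h1 h0 => absurd (h1.trans h0) (Nat.not_succ_le_zero 0)⟩
  · have hd : 1 ≤ d := by
      by_contra hd0
      have h0 : d = 0 := by omega
      subst h0
      apply hPQ
      have key : ∀ x y : EucSp 0, x = y := fun x y => PiLp.ext fun i => i.elim0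
      obtain ⟨aP, haP⟩ := tile_int_nonempty T hP
      obtain ⟨aQ, haQ⟩ := tile_int_nonempty T hQ
      ext z
      constructor
      · intro _
        rw [key z aQ]
        exact interior_subset haQ
      · intro _
        rw [key z aP]
        exact interior_subset haP
    obtain ⟨a, ha⟩ := tile_int_nonempty T hP
    obtain ⟨b, hb⟩ := tile_int_nonempty T hQ
    have haS : a ∉ Sset T := notin_S_of_interior T hP ha
    have hbS : b ∉ Sset T := notin_S_of_interior T hQ hb
    set 𝒜 : Set (AffineSubspace ℝ (EucSp d)) :=
      (fun A => affineSpan ℝ (insert a A)) '' badPieces T ∪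
      (fun A => affineSpan ℝ (insert b A)) '' badPieces T with h𝒜
    have hcount : 𝒜.Countable :=
      ((badPieces_countable T).image _).union ((badPieces_countable T).image _)
    have hdim : ∀ A ∈ 𝒜, Module.finrank ℝ A.direction < d := by
      rintro B (⟨A, hA, rfl⟩ | ⟨A, hA, rfl⟩) <;>
        obtain ⟨P', hP', Q', hQ', hne, rfl, hdimA⟩ := hA
      · exact span_insert_finrank a _ hdimA hd
      · exact span_insert_finrank b _ hdimA hd
    obtain ⟨c, hc⟩ := exists_avoid 𝒜 hcount hdim
    have hsegA : ∀ x ∈ segment ℝ a c, x ∉ Sset T := by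
      rintro x hx ⟨A, hA, hxA⟩
      have haA : a ∉ A := fun h => haS ⟨A, hA, h⟩
      exact segment_avoid haA (hc _ (Or.inl ⟨A, hA, rfl⟩)) x hx hxA
    have hsegB : ∀ x ∈ segment ℝ b c, x ∉ Sset T := by
      rintro x hx ⟨A, hA, hxA⟩
      have hbA : b ∉ A := fun h => hbS ⟨A, hA, h⟩
      exact segment_avoid hbA (hc _ (Or.inr ⟨A, hA, rfl⟩)) x hx hxA
    obtain ⟨R₁, hR₁t, hcR₁, hrtg₁⟩ := seg_reach T hsegA hP (interior_subset ha)
    obtain ⟨R₂, hR₂t, hcR₂, hrtg₂⟩ := seg_reach T hsegB hQ (interior_subset hb)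
    have hcS : c ∉ Sset T := hsegA c (right_mem_segment ℝ a c)
    have hgood : Good T R₁ R₂ := ⟨hR₁t, hR₂t, c, hcS, hcR₁, hcR₂⟩
    have hrtg : Relation.ReflTransGen (Good T) P Q :=
      (hrtg₁.tail hgood).trans (by haveI : Std.Symm (Good T) := ⟨fun a b h => good_symm T h⟩; exact Std.Symm.symm _ _ hrtg₂)
    obtain ⟨n, f, hf0, hfn, hmem, hstep⟩ := chain_of_rtg T hP hrtg
    refine ⟨⟨n, f, hf0, hfn, hmem, hstep⟩, ?_⟩
    apply tileDist_ne_top_of_chain T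
    exact ⟨f, hf0, hfn, hmem, fun j h1 hn => by have := (hstep j h1 hn).2.2; omega⟩

end
end

section
/- Local Theorem for crystallographic tilings (necessity). Let T be a locally finite face-to-face tiling of Euclidean d-space ℝ^d by convex d-polytopes with only finitely many congruence classes of tiles. If T is periodic, then there exists a positive integer k such that: (1) M_{k−1}(T) = M_k(T); and (2) for every tile P of T, G_{k−1}(P) = G_k(P), i.e. every symmetry of the centered (k−1)-st tile corona of P is a symmetry of the centered k-th tile corona of P. -/
noncomputable section
open scoped Classical

variable {d : ℕ}

/-- The `k`-th tile corona of `P`: the set of tiles at distance at most `k` from `P`. -/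
def tileCorona (T : Tiling d) (k : ℕ) (P : Set (EucSp d)) : Set (Set (EucSp d)) :=
  {Q | Q ∈ T.tiles ∧ tileDist T P Q ≤ (k : ℕ∞)}

/-- The centered `k`-th tile coronas `(P, C_k(P))` and `(P', C_k(P'))` are pairwise congruent. -/
def CongruentCoronas (T : Tiling d) (k : ℕ) (P P' : Set (EucSp d)) : Prop :=
  ∃ α : EucSp d ≃ᵢ EucSp d, α '' P = P' ∧
    (fun Q => α '' Q) '' tileCorona T k P = tileCorona T k P'

/-- `M_k(T)`: the number of pairwise congruence classes of centered `k`-th tile coronas. -/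
def Mcount (T : Tiling d) (k : ℕ) : Cardinal :=
  Cardinal.mk (Quot (fun P Q : ↥T.tiles =>
    CongruentCoronas T k (P : Set (EucSp d)) (Q : Set (EucSp d))))

/-- `α` is a symmetry of the tiling `T`: an isometry of `ℝ^d` mapping `T` onto itself. -/
def IsSymmetryOf (T : Tiling d) (α : EucSp d ≃ᵢ EucSp d) : Prop :=
  (fun Q => α '' Q) '' T.tiles = T.tiles

/-- Two tiles are equivalent under the symmetry group `G(T)` of `T`. -/
def GeomEquiv (T : Tiling d) (P Q : Set (EucSp d)) : Prop :=
  ∃ α : EucSp d ≃ᵢ EucSp d, IsSymmetryOf T α ∧ α '' P = Q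

/-- The number of orbits of `G(T)` on the tiles of `T`. -/
def geomOrbitCount (T : Tiling d) : Cardinal :=
  Cardinal.mk (Quot (fun P Q : ↥T.tiles =>
    GeomEquiv T (P : Set (EucSp d)) (Q : Set (EucSp d))))

/-- `G_{k-1}(P) = G_k(P)`: every symmetry of the centered `(k-1)`-st tile corona of `P`
is a symmetry of the centered `k`-th tile corona of `P`. -/
def SymsExtend (T : Tiling d) (k : ℕ) (P : Set (EucSp d)) : Prop :=
  ∀ α : EucSp d ≃ᵢ EucSp d, α '' P = P →
    (fun Q => α '' Q) '' tileCorona T (k - 1) P = tileCorona T (k - 1) P →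
    (fun Q => α '' Q) '' tileCorona T k P = tileCorona T k P

section AuxLemmas

variable {d : ℕ}

/-- Isometries preserve `fdimZ`. -/
lemma fdimZ_image (α : EucSp d ≃ᵢ EucSp d) (F : Set (EucSp d)) :
    fdimZ (α '' F) = fdimZ F := by
  unfold fdimZ
  by_cases h : F = ∅
  · simp [h]
  · have h' : α '' F ≠ ∅ := by
      simpa [Set.image_eq_empty] using h
    rw [if_neg h', if_neg h]
    norm_cast
    set e : EucSp d ≃ᵃ[ℝ] EucSp d := α.toRealAffineIsometryEquiv.toAffineEquiv with he
    have hcoe : ⇑e.toAffineMap = ⇑α := by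
      ext x
      simp [he, AffineIsometryEquiv.coe_toAffineEquiv,
        IsometryEquiv.coeFn_toRealAffineIsometryEquiv]
    have h1 : affineSpan ℝ (α '' F) = (affineSpan ℝ F).map e.toAffineMap := by
      rw [AffineSubspace.map_span, hcoe]
    rw [h1, AffineSubspace.map_direction, AffineEquiv.linear_toAffineMap]
    exact LinearEquiv.finrank_map_eq e.linear _

lemma tileDist_le_of_chain {T : Tiling d} {P Q : Set (EucSp d)} {m : ℕ}
    (h : TileChain T P Q m) : tileDist T P Q ≤ (m : ℕ∞) :=
  sInf_le ⟨m, rfl, h⟩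

lemma exists_chain_of_dist_le {T : Tiling d} {P Q : Set (EucSp d)} {j : ℕ}
    (h : tileDist T P Q ≤ (j : ℕ∞)) : ∃ m ≤ j, TileChain T P Q m := by
  by_contra hc
  push_neg at hc
  have hlt : (j : ℕ∞) < tileDist T P Q := by
    have : ((j + 1 : ℕ) : ℕ∞) ≤ tileDist T P Q := by
      refine le_sInf ?_
      rintro n ⟨m, rfl, hm⟩
      exact_mod_cast Nat.succ_le_of_lt (lt_of_not_ge fun hle => hc m hle hm)
    refine lt_of_lt_of_le ?_ this
    exact_mod_cast Nat.lt_succ_self j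
  exact absurd h (not_le.mpr hlt)

lemma chain_prefix_dist {T : Tiling d} {P : Set (EucSp d)} {m : ℕ} {f : ℕ → Set (EucSp d)}
    (hf0 : f 0 = P) (htiles : ∀ i ≤ m, f i ∈ T.tiles)
    (hdim : ∀ i, 1 ≤ i → i ≤ m → (d : ℤ) - 2 ≤ fdimZ (f (i - 1) ∩ f i))
    {j : ℕ} (hj : j ≤ m) : tileDist T P (f j) ≤ (j : ℕ∞) :=
  tileDist_le_of_chain ⟨f, hf0, rfl, fun i hi => htiles i (hi.trans hj),
    fun i h1 h2 => hdim i h1 (h2.trans hj)⟩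

/-- If `α` maps all tiles of the `k`-th corona of `P` to tiles, then it does not increase
tile distances from `P` within the corona. -/
lemma dist_image_le (T : Tiling d) (α : EucSp d ≃ᵢ EucSp d) {P : Set (EucSp d)} {k : ℕ}
    (hmap : ∀ Q ∈ tileCorona T k P, α '' Q ∈ T.tiles)
    {Q : Set (EucSp d)} {j : ℕ} (hj : j ≤ k) (hQ : tileDist T P Q ≤ (j : ℕ∞)) :
    tileDist T (α '' P) (α '' Q) ≤ (j : ℕ∞) := by
  obtain ⟨m, hm, f, hf0, hfm, htiles, hdim⟩ := exists_chain_of_dist_le hQ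
  have hmem : ∀ i ≤ m, f i ∈ tileCorona T k P := by
    intro i hi
    refine ⟨htiles i hi, ?_⟩
    have := chain_prefix_dist hf0 htiles hdim hi
    exact this.trans (by exact_mod_cast (hi.trans hm).trans hj)
  have hchain : TileChain T (α '' P) (α '' Q) m := by
    refine ⟨fun i => α '' f i, by simp [hf0], by simp [hfm], ?_, ?_⟩
    · intro i hi
      exact hmap _ (hmem i hi)
    · intro i h1 h2
      rw [← Set.image_inter α.injective, fdimZ_image]
      exact hdim i h1 h2
  exact (tileDist_le_of_chain hchain).trans (by exact_mod_cast hm)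

end AuxLemmas
section AuxLemmas2

variable {d : ℕ}

lemma img_img (α β : EucSp d ≃ᵢ EucSp d) (S : Set (Set (EucSp d))) :
    (fun Q => β '' Q) '' ((fun Q => α '' Q) '' S) = (fun Q => (α.trans β) '' Q) '' S := by
  rw [Set.image_image]
  simp [Set.image_image]
  rfl

lemma img_symm_cancel (α : EucSp d ≃ᵢ EucSp d) (S : Set (Set (EucSp d))) :
    (fun Q => α.symm '' Q) '' ((fun Q => α '' Q) '' S) = S := by
  rw [Set.image_image]
  have : ∀ Q : Set (EucSp d), α.symm '' (α '' Q) = Q := fun Q => by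
    rw [← Set.image_comp]; simp
  simp only [this, Set.image_id']

lemma img_cancel_symm (α : EucSp d ≃ᵢ EucSp d) (S : Set (Set (EucSp d))) :
    (fun Q => α '' Q) '' ((fun Q => α.symm '' Q) '' S) = S := by
  simpa using img_symm_cancel α.symm S

/-- If `α` maps `P` to `P'` and the `k`-th tile corona of `P` onto that of `P'`, then it does
the same for every `j ≤ k`. -/
lemma corona_image_eq (T : Tiling d) (α : EucSp d ≃ᵢ EucSp d) {P P' : Set (EucSp d)} {k : ℕ}
    (hP : α '' P = P')
    (h : (fun Q => α '' Q) '' tileCorona T k P = tileCorona T k P') {j : ℕ} (hj : j ≤ k) :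
    (fun Q => α '' Q) '' tileCorona T j P = tileCorona T j P' := by
  have hmap : ∀ R ∈ tileCorona T k P, α '' R ∈ T.tiles := by
    intro R hR
    have : α '' R ∈ tileCorona T k P' := h ▸ Set.mem_image_of_mem _ hR
    exact this.1
  have hmap' : ∀ S ∈ tileCorona T k P', α.symm '' S ∈ T.tiles := by
    intro S hS
    rw [← h] at hS
    obtain ⟨Q, hQ, rfl⟩ := hS
    have : α.symm '' (α '' Q) = Q := by rw [← Set.image_comp]; simp
    rw [this]
    exact hQ.1
  have hP' : α.symm '' P' = P := by
    rw [← hP, ← Set.image_comp]; simp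
  apply Set.Subset.antisymm
  · rintro _ ⟨Q, hQ, rfl⟩
    refine ⟨hmap Q ⟨hQ.1, hQ.2.trans (by exact_mod_cast hj)⟩, ?_⟩
    rw [← hP]
    exact dist_image_le T α hmap hj hQ.2
  · intro R hR
    refine ⟨α.symm '' R, ⟨hmap' R ⟨hR.1, hR.2.trans (by exact_mod_cast hj)⟩, ?_⟩, ?_⟩
    · rw [← hP']
      exact dist_image_le T α.symm hmap' hj hR.2
    · show α '' (α.symm '' R) = R
      rw [← Set.image_comp]; simp

lemma refl_image (Q : Set (EucSp d)) : (IsometryEquiv.refl (EucSp d)) '' Q = Q := by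
  ext x
  exact ⟨fun ⟨y, hy, e⟩ => e ▸ hy, fun hx => ⟨x, hx, rfl⟩⟩

lemma isSymmetryOf_refl (T : Tiling d) : IsSymmetryOf T (IsometryEquiv.refl (EucSp d)) := by
  unfold IsSymmetryOf
  simp only [refl_image, Set.image_id']

lemma isSymmetryOf_symm {T : Tiling d} {α : EucSp d ≃ᵢ EucSp d} (h : IsSymmetryOf T α) :
    IsSymmetryOf T α.symm := by
  unfold IsSymmetryOf at h ⊢
  conv_lhs => rw [← h]
  rw [img_symm_cancel, ← h]

lemma isSymmetryOf_trans {T : Tiling d} {α β : EucSp d ≃ᵢ EucSp d}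
    (hα : IsSymmetryOf T α) (hβ : IsSymmetryOf T β) : IsSymmetryOf T (α.trans β) := by
  unfold IsSymmetryOf at hα hβ ⊢
  rw [← img_img, hα, hβ]

/-- A symmetry of the tiling maps the `k`-th corona of `P` onto that of `α '' P`. -/
lemma corona_image_of_symmetry (T : Tiling d) {α : EucSp d ≃ᵢ EucSp d}
    (hα : IsSymmetryOf T α) (P : Set (EucSp d)) (k : ℕ) :
    (fun Q => α '' Q) '' tileCorona T k P = tileCorona T k (α '' P) := by
  have hmap : ∀ (β : EucSp d ≃ᵢ EucSp d), IsSymmetryOf T β →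
      ∀ R ∈ T.tiles, β '' R ∈ T.tiles := by
    intro β hβ R hR
    rw [← hβ]
    exact Set.mem_image_of_mem _ hR
  apply Set.Subset.antisymm
  · rintro _ ⟨Q, hQ, rfl⟩
    exact ⟨hmap α hα Q hQ.1,
      dist_image_le T α (fun R hR => hmap α hα R hR.1) le_rfl hQ.2⟩
  · intro R hR
    refine ⟨α.symm '' R, ⟨hmap α.symm (isSymmetryOf_symm hα) R hR.1, ?_⟩, ?_⟩
    · have := dist_image_le T α.symm
        (fun S hS => hmap α.symm (isSymmetryOf_symm hα) S hS.1) le_rfl hR.2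
      rwa [show α.symm '' (α '' P) = P by rw [← Set.image_comp]; simp] at this
    · show α '' (α.symm '' R) = R
      rw [← Set.image_comp]; simp

lemma geomEquiv_equivalence (T : Tiling d) :
    Equivalence (fun P Q : ↥T.tiles => GeomEquiv T (P : Set (EucSp d)) (Q : Set (EucSp d))) := by
  constructor
  · intro P
    exact ⟨IsometryEquiv.refl _, isSymmetryOf_refl T, refl_image _⟩
  · rintro P Q ⟨α, hα, hP⟩
    exact ⟨α.symm, isSymmetryOf_symm hα, by rw [← hP, ← Set.image_comp]; simp⟩
  · rintro P Q R ⟨α, hα, hP⟩ ⟨β, hβ, hQ⟩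
    exact ⟨α.trans β, isSymmetryOf_trans hα hβ, by
      rw [← hQ, ← hP, ← Set.image_comp]; rfl⟩

lemma congruentCoronas_of_le {T : Tiling d} {P P' : Set (EucSp d)} {j k : ℕ} (hj : j ≤ k)
    (h : CongruentCoronas T k P P') : CongruentCoronas T j P P' := by
  obtain ⟨α, hP, hC⟩ := h
  exact ⟨α, hP, corona_image_eq T α hP hC hj⟩

lemma congruentCoronas_of_geomEquiv {T : Tiling d} {P P' : Set (EucSp d)} (k : ℕ)
    (h : GeomEquiv T P P') : CongruentCoronas T k P P' := by
  obtain ⟨α, hα, hP⟩ := h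
  exact ⟨α, hP, by rw [corona_image_of_symmetry T hα, hP]⟩

end AuxLemmas2
section AuxLemmas3

variable {d : ℕ}

/-- Two affine maps agreeing on a spanning set are equal everywhere. -/
lemma affineMap_eqOn_top {f g : EucSp d →ᵃ[ℝ] EucSp d} {s : Set (EucSp d)}
    (h : Set.EqOn f g s) (hs : affineSpan ℝ s = ⊤) : ∀ x, f x = g x := by
  intro x
  have hx : x ∈ affineSpan ℝ s := by rw [hs]; exact AffineSubspace.mem_top _ _ _
  refine affineSpan_induction (p := fun y => f y = g y) hx (fun y hy => h hy) ?_
  intro c u v w hu hv hw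
  simp only [AffineMap.map_vadd, map_smul, AffineMap.linearMap_vsub, hu, hv, hw]

/-- Affine equivalences map extreme points onto extreme points of the image. -/
lemma image_extremePoints_affine (e : EucSp d ≃ᵃ[ℝ] EucSp d) (s : Set (EucSp d)) :
    e '' Set.extremePoints ℝ s = Set.extremePoints ℝ (e '' s) := by
  have himg : ∀ x y : EucSp d, e '' openSegment ℝ x y = openSegment ℝ (e x) (e y) := by
    intro x y
    have h0 := image_openSegment ℝ e.toAffineMap x y
    rwa [AffineEquiv.coe_toAffineMap] at h0
  ext b
  constructor
  · rintro ⟨x, hx, rfl⟩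
    rw [mem_extremePoints] at hx ⊢
    refine ⟨Set.mem_image_of_mem _ hx.1, ?_⟩
    rintro _ ⟨y₁, hy₁, rfl⟩ _ ⟨y₂, hy₂, rfl⟩ hseg
    rw [← himg] at hseg
    obtain ⟨z, hz, hze⟩ := hseg
    have hzx : z = x := e.injective hze
    subst hzx
    obtain ⟨h1, h2⟩ := hx.2 y₁ hy₁ y₂ hy₂ hz
    exact ⟨congrArg e h1, congrArg e h2⟩
  · intro hb
    rw [mem_extremePoints] at hb
    obtain ⟨⟨a, ha, rfl⟩, hext⟩ := hb
    refine ⟨a, ?_, rfl⟩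
    rw [mem_extremePoints]
    refine ⟨ha, ?_⟩
    intro x₁ hx₁ x₂ hx₂ hseg
    have : e a ∈ openSegment ℝ (e x₁) (e x₂) := by
      rw [← himg]
      exact Set.mem_image_of_mem _ hseg
    obtain ⟨h1, h2⟩ := hext (e x₁) (Set.mem_image_of_mem _ hx₁) (e x₂)
      (Set.mem_image_of_mem _ hx₂) this
    exact ⟨e.injective h1, e.injective h2⟩

/-- The set of isometries of `ℝ^d` mapping a polytope onto itself is finite. -/
lemma finite_symmetries {P : Set (EucSp d)} (hP : IsPolytope d P) :
    {α : EucSp d ≃ᵢ EucSp d | α '' P = P}.Finite := by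
  obtain ⟨⟨s, hs⟩, hint⟩ := hP
  set E := Set.extremePoints ℝ P with hE
  have hEfin : E.Finite := by
    refine s.finite_toSet.subset ?_
    rw [hE, hs]
    exact extremePoints_convexHull_subset
  have hcomp : IsCompact P := by rw [hs]; exact s.finite_toSet.isCompact_convexHull ℝ
  have hconv : Convex ℝ P := by rw [hs]; exact convex_convexHull ℝ _
  have hKM : closure (convexHull ℝ E) = P := closure_convexHull_extremePoints hcomp hconv
  have hspanP : affineSpan ℝ P = ⊤ := by
    refine affineSpan_eq_top_of_nonempty_interior ?_
    rwa [hconv.convexHull_eq]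
  have hspanE : affineSpan ℝ E = ⊤ := by
    refine top_unique ?_
    rw [← hspanP]
    refine affineSpan_le.mpr ?_
    rw [← hKM]
    refine closure_minimal ?_ (AffineSubspace.closed_of_finiteDimensional _)
    exact convexHull_subset_affineSpan E
  -- each symmetry maps `E` onto itself
  have hmapsE : ∀ α : EucSp d ≃ᵢ EucSp d, α '' P = P → α '' E = E := by
    intro α hα
    have : (α.toRealAffineIsometryEquiv.toAffineEquiv : EucSp d → EucSp d) = ⇑α := by
      ext x
      simp [AffineIsometryEquiv.coe_toAffineEquiv, IsometryEquiv.coeFn_toRealAffineIsometryEquiv]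
    have h2 := image_extremePoints_affine α.toRealAffineIsometryEquiv.toAffineEquiv P
    rw [this, hα] at h2
    exact h2
  haveI : Finite ↥E := hEfin.to_subtype
  rw [← Set.finite_coe_iff]
  let Φ : ↥{α : EucSp d ≃ᵢ EucSp d | α '' P = P} → (↥E → ↥E) := fun α x =>
    ⟨α.1 x.1, by
      have hm := Set.mem_image_of_mem (⇑α.1) x.2
      rwa [hmapsE α.1 α.2] at hm⟩
  have hΦ : Function.Injective Φ := by
    intro α β hαβ
    have heq : Set.EqOn (⇑α.1) (⇑β.1) E := by
      intro x hx
      have := congrFun hαβ ⟨x, hx⟩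
      exact Subtype.ext_iff.mp this
    have hcoeα : ⇑(α.1.toRealAffineIsometryEquiv.toAffineEquiv.toAffineMap) = ⇑α.1 := by
      ext x
      simp [AffineIsometryEquiv.coe_toAffineEquiv, IsometryEquiv.coeFn_toRealAffineIsometryEquiv]
    have hcoeβ : ⇑(β.1.toRealAffineIsometryEquiv.toAffineEquiv.toAffineMap) = ⇑β.1 := by
      ext x
      simp [AffineIsometryEquiv.coe_toAffineEquiv, IsometryEquiv.coeFn_toRealAffineIsometryEquiv]
    have : ∀ x, α.1 x = β.1 x := by
      have := affineMap_eqOn_top (f := α.1.toRealAffineIsometryEquiv.toAffineEquiv.toAffineMap)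
        (g := β.1.toRealAffineIsometryEquiv.toAffineEquiv.toAffineMap)
        (s := E) (by rw [hcoeα, hcoeβ]; exact heq) hspanE
      intro x
      have h' := this x
      rwa [hcoeα, hcoeβ] at h'
    apply Subtype.ext
    exact IsometryEquiv.ext this
  exact Finite.of_injective Φ hΦ

end AuxLemmas3
section AuxLemmas4

variable {d : ℕ}

/-- The symmetry group of the centered `k`-th tile corona of `P`, as a set of isometries. -/
def Gset (T : Tiling d) (k : ℕ) (P : Set (EucSp d)) : Set (EucSp d ≃ᵢ EucSp d) :=
  {α | α '' P = P ∧ (fun Q => α '' Q) '' tileCorona T k P = tileCorona T k P}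

lemma Gset_antitone (T : Tiling d) {j k : ℕ} (hj : j ≤ k) (P : Set (EucSp d)) :
    Gset T k P ⊆ Gset T j P := fun α hα =>
  ⟨hα.1, corona_image_eq T α hα.1 hα.2 hj⟩

lemma Gset_finite (T : Tiling d) (k : ℕ) {P : Set (EucSp d)} (hP : P ∈ T.tiles) :
    (Gset T k P).Finite :=
  (finite_symmetries (T.polytope P hP)).subset fun _ hα => hα.1

/-- The sequence of corona symmetry groups of a tile stabilizes. -/
lemma Gset_stabilizes (T : Tiling d) {P : Set (EucSp d)} (hP : P ∈ T.tiles) :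
    ∃ K : ℕ, ∀ n ≥ K, Gset T n P = Gset T K P := by
  set c : ℕ → ℕ := fun n => (Gset T n P).ncard with hc
  have hanti : ∀ {i j : ℕ}, i ≤ j → c j ≤ c i := by
    intro i j hij
    exact Set.ncard_le_ncard (Gset_antitone T hij P) (Gset_finite T i hP)
  obtain ⟨K, hK⟩ : ∃ K, c K = sInf (Set.range c) :=
    Nat.sInf_mem (Set.range_nonempty c)
  refine ⟨K, fun n hn => ?_⟩
  refine Set.eq_of_subset_of_ncard_le (Gset_antitone T hn P) ?_ (Gset_finite T K hP)
  exact le_trans (le_of_eq hK) (Nat.sInf_le ⟨n, rfl⟩)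

/-- Transfer of the extension property along the symmetry group of the tiling. -/
lemma symsExtend_transfer (T : Tiling d) {P R : Set (EucSp d)} (k : ℕ)
    (hPR : GeomEquiv T P R) (hR : SymsExtend T k R) : SymsExtend T k P := by
  obtain ⟨β, hβ, hβP⟩ := hPR
  intro α hαP hαC
  have hβc : ∀ j : ℕ, (fun Q => β '' Q) '' tileCorona T j P = tileCorona T j R := by
    intro j
    rw [corona_image_of_symmetry T hβ, hβP]
  have hβc' : ∀ j : ℕ, (fun Q => β.symm '' Q) '' tileCorona T j R = tileCorona T j P := by
    intro j
    rw [← hβc j, img_symm_cancel]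
  set α' : EucSp d ≃ᵢ EucSp d := (β.symm.trans α).trans β with hα'
  have hcomp : ∀ S : Set (Set (EucSp d)), (fun Q => α' '' Q) '' S =
      (fun Q => β '' Q) '' ((fun Q => α '' Q) '' ((fun Q => β.symm '' Q) '' S)) := by
    intro S
    rw [img_img, img_img]
    rfl
  have himg3 : ∀ Q : Set (EucSp d), α' '' Q = β '' (α '' (β.symm '' Q)) := by
    intro Q
    ext x
    simp only [hα', Set.mem_image, IsometryEquiv.trans_apply]
    constructor
    · rintro ⟨y, hy, rfl⟩
      exact ⟨α (β.symm y), ⟨β.symm y, ⟨y, hy, rfl⟩, rfl⟩, rfl⟩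
    · rintro ⟨z, ⟨w, ⟨y, hy, rfl⟩, rfl⟩, rfl⟩
      exact ⟨y, hy, rfl⟩
  have hα'R : α' '' R = R := by
    have h1 : β.symm '' R = P := by rw [← hβP, ← Set.image_comp]; simp
    rw [himg3, h1, hαP, hβP]
  have hα'C : (fun Q => α' '' Q) '' tileCorona T (k - 1) R = tileCorona T (k - 1) R := by
    rw [hcomp, hβc' (k - 1), hαC, hβc (k - 1)]
  have hα'k := hR α' hα'R hα'C
  -- translate back
  have : (fun Q => α '' Q) '' tileCorona T k P
      = (fun Q => β.symm '' Q) '' ((fun Q => α' '' Q) '' ((fun Q => β '' Q) '' tileCorona T k P)) := by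
    rw [hcomp, img_symm_cancel]

    rw [img_symm_cancel]
  rw [this, hβc k, hα'k, hβc' k]

lemma mcount_mono (T : Tiling d) {j k : ℕ} (hj : j ≤ k) : Mcount T j ≤ Mcount T k := by
  unfold Mcount
  refine Cardinal.mk_le_of_surjective (f := Quot.lift
    (fun P => Quot.mk _ P) (fun P Q hPQ => Quot.sound (congruentCoronas_of_le hj hPQ))) ?_
  intro q
  obtain ⟨P, rfl⟩ := Quot.exists_rep q
  exact ⟨Quot.mk _ P, rfl⟩

lemma mcount_le_geom (T : Tiling d) (k : ℕ) : Mcount T k ≤ geomOrbitCount T := by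
  unfold Mcount geomOrbitCount
  refine Cardinal.mk_le_of_surjective (f := Quot.lift
    (fun P => Quot.mk _ P) (fun P Q hPQ => Quot.sound (congruentCoronas_of_geomEquiv k hPQ))) ?_
  intro q
  obtain ⟨P, rfl⟩ := Quot.exists_rep q
  exact ⟨Quot.mk _ P, rfl⟩

end AuxLemmas4
/-- Local Theorem for crystallographic tilings (necessity): if `T` has finitely many
congruence classes of tiles and is periodic, then for some positive `k`,
`M_{k-1}(T) = M_k(T)` and for every tile `P` every symmetry of the centered `(k-1)`-st tile
corona of `P` is a symmetry of the centered `k`-th tile corona of `P`. -/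
theorem local_conditions_of_periodic (d : ℕ) (T : Tiling d)
    (hfin : Mcount T 0 < Cardinal.aleph0)
    (h : geomOrbitCount T < Cardinal.aleph0) :
    ∃ k : ℕ, 1 ≤ k ∧ Mcount T (k - 1) = Mcount T k ∧
      ∀ P ∈ T.tiles, SymsExtend T k P := by
  classical
  -- the quotient by the symmetry group is finite
  set r : ↥T.tiles → ↥T.tiles → Prop :=
    fun P Q => GeomEquiv T (P : Set (EucSp d)) (Q : Set (EucSp d)) with hr
  haveI hOfin : Finite (Quot r) := by
    rw [← Cardinal.lt_aleph0_iff_finite]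
    exact h
  haveI : Fintype (Quot r) := Fintype.ofFinite _
  -- stabilization of Mcount
  have hMfin : ∀ n : ℕ, Mcount T n < Cardinal.aleph0 :=
    fun n => lt_of_le_of_lt (mcount_le_geom T n) h
  set μ : ℕ → ℕ := fun n => (Mcount T n).toNat with hμ
  have hμmono : ∀ {i j : ℕ}, i ≤ j → μ i ≤ μ j :=
    fun {i j} hij => Cardinal.toNat_le_toNat (mcount_mono T hij) (hMfin j)
  have hμbdd : BddAbove (Set.range μ) := by
    refine ⟨(geomOrbitCount T).toNat, ?_⟩
    rintro _ ⟨n, rfl⟩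
    exact Cardinal.toNat_le_toNat (mcount_le_geom T n) h
  obtain ⟨K₀, hK₀⟩ : ∃ K₀, μ K₀ = sSup (Set.range μ) :=
    Nat.sSup_mem (Set.range_nonempty μ) hμbdd
  have hμconst : ∀ n ≥ K₀, Mcount T n = Mcount T K₀ := by
    intro n hn
    have h1 : μ n = μ K₀ := by
      refine le_antisymm ?_ (hμmono hn)
      rw [hK₀]
      exact le_csSup hμbdd ⟨n, rfl⟩
    exact (Cardinal.toNat_injOn (hMfin n) (hMfin K₀) h1)
  -- stabilization of the corona symmetry groups of orbit representatives
  have hKq : ∀ q : Quot r, ∃ K : ℕ,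
      ∀ n ≥ K, Gset T n ((q.out : ↥T.tiles) : Set (EucSp d))
        = Gset T K ((q.out : ↥T.tiles) : Set (EucSp d)) :=
    fun q => Gset_stabilizes T (q.out : ↥T.tiles).2
  choose K hK using hKq
  set Kmax : ℕ := Finset.univ.sup K with hKmax
  refine ⟨max K₀ Kmax + 1, Nat.succ_le_succ (Nat.zero_le _), ?_, ?_⟩
  · have h1 : max K₀ Kmax + 1 - 1 = max K₀ Kmax := by omega
    rw [h1, hμconst (max K₀ Kmax) (le_max_left _ _),
      hμconst (max K₀ Kmax + 1) ((le_max_left K₀ Kmax).trans (Nat.le_succ _))]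
  · intro P hP
    set k := max K₀ Kmax + 1 with hk
    set q : Quot r := Quot.mk r ⟨P, hP⟩ with hq
    set R : Set (EucSp d) := ((q.out : ↥T.tiles) : Set (EucSp d)) with hR
    have hgeq : GeomEquiv T P R := by
      have : Quot.mk r ⟨P, hP⟩ = Quot.mk r q.out := by rw [← hq, Quot.out_eq]
      have := Quot.eqvGen_exact this
      exact ((geomEquiv_equivalence T).eqvGen_iff).mp this
    refine symsExtend_transfer T k hgeq ?_
    -- SymsExtend for the representative R
    intro α hαR hαC
    have hKle : K q ≤ k - 1 := by
      have : K q ≤ Kmax := Finset.le_sup (Finset.mem_univ q)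
      omega
    have hstab1 : Gset T (k - 1) R = Gset T (K q) R := hK q (k - 1) hKle
    have hstab2 : Gset T k R = Gset T (K q) R := hK q k (hKle.trans (by omega))
    have hmem : α ∈ Gset T (k - 1) R := ⟨hαR, hαC⟩
    have : α ∈ Gset T k R := by
      rw [hstab2, ← hstab1]
      exact hmem
    exact this.2

end
end
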